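/- arXiv:2008.00984 — 3 statements merged into one kernel-verified Lean document; each statement's English description precedes it below -/
import Mathlib

section
/- Let T ⊂ S(N) be any transversal of the right cosets of the subgroup S(N−k) (permuting {1,…,N−k}) in S(N), where S(N) acts by V_τ on the port factors A_1,…,A_N. Then: (i) the map τ ↦ (τ⁻¹(N), τ⁻¹(N−1), …, τ⁻¹(N−k+1)) is a bijection from T onto I; (ii) σ_{(N,N−1,…,N−k+1)} = (1/d^N)·V^{(k)}; and (iii) the MPBT operator satisfies ρ = Σ_{i∈I} σ_i = (1/d^N)·Σ_{τ∈T} V_{τ⁻¹}·V^{(k)}·V_τ. -/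
open scoped BigOperators
open scoped Classical
open scoped ComplexOrder
open Matrix

noncomputable section

/-- Square matrices on the computational basis of `(ℂ^d)^{⊗ n}`. -/
abbrev Mat (d n : ℕ) := Matrix (Fin n → Fin d) (Fin n → Fin d) ℂ

/-- The unitary permuting the tensor factors according to `σ`. -/
def Vperm (d n : ℕ) (σ : Equiv.Perm (Fin n)) : Mat d n :=
  Matrix.of fun f g => if f ∘ σ = g then (1 : ℂ) else 0

/-- Orthogonal projector onto the maximally entangled state of factors `r` and `s`,
tensored with the identity on the remaining factors. -/
def Pplus (d n : ℕ) (r s : Fin n) : Mat d n :=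
  Matrix.of fun f g =>
    if f r = f s ∧ g r = g s ∧ ∀ t : Fin n, t ≠ r → t ≠ s → f t = g t
    then (1 : ℂ) / d else 0

/-- `V^{(k)} = d^k · P⁺_{n-2k+1,n} ⋯ P⁺_{n-k,n-k+1}` on `n = a + 2k` factors
(`a = n - 2k`), tensored with the identity on the remaining factors. -/
def Vk (d a k : ℕ) : Mat d (a + k + k) :=
  ((d : ℂ) ^ k) •
    ((List.finRange k).map fun j : Fin k =>
      Pplus d (a + k + k) ⟨a + (j : ℕ), by have := j.isLt; omega⟩
        ⟨a + k + k - 1 - (j : ℕ), by have := j.isLt; omega⟩).prod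

/-- Extension of an operator on the first `m` factors by the identity on the rest. -/
def extOp {d m n : ℕ} (h : m ≤ n) (X : Mat d m) : Mat d n :=
  Matrix.of fun f g =>
    if ∀ i : Fin n, m ≤ (i : ℕ) → f i = g i
    then X (fun i => f (Fin.castLE h i)) (fun i => g (Fin.castLE h i)) else 0

def splice {d a b : ℕ} (f : Fin a → Fin d) (t : Fin b → Fin d) : Fin (a + b) → Fin d :=
  fun i => if h : (i : ℕ) < a then f ⟨i, h⟩ else t ⟨(i : ℕ) - a, by have := i.isLt; omega⟩

/-- Partial trace over the last `b` tensor factors. -/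
def ptraceLast {d : ℕ} (a b : ℕ) (X : Mat d (a + b)) : Mat d a :=
  Matrix.of fun f g => ∑ t : Fin b → Fin d, X (splice f t) (splice g t)

def finLtEquiv {m n : ℕ} (h : m ≤ n) : Fin m ≃ {i : Fin n // (i : ℕ) < m} where
  toFun i := ⟨⟨(i : ℕ), lt_of_lt_of_le i.isLt h⟩, i.isLt⟩
  invFun j := ⟨(j.1 : ℕ), j.2⟩
  left_inv i := rfl
  right_inv j := rfl

/-- The embedding of `S(m)` into `S(n)`, acting on the first `m` letters. -/
def permExt {m n : ℕ} (h : m ≤ n) (σ : Equiv.Perm (Fin m)) : Equiv.Perm (Fin n) :=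
  σ.extendDomain (finLtEquiv h)

/-- A unitary irreducible matrix representation (Schur's criterion). -/
def IsUnitaryIrrep {G : Type*} [Group G] {e : ℕ}
    (φ : G →* Matrix (Fin e) (Fin e) ℂ) : Prop :=
  (∀ g, (φ g)ᴴ * φ g = 1) ∧
  ∀ X : Matrix (Fin e) (Fin e) ℂ, (∀ g, X * φ g = φ g * X) →
    ∃ c : ℂ, X = c • (1 : Matrix (Fin e) (Fin e) ℂ)

/-- Operator basis `E^μ_{ij} = (d_μ/m!) Σ_τ φ^μ_{ji}(τ⁻¹) V_τ` on the first `m` factors. -/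
def Eop (d m : ℕ) {e : ℕ} (φ : Equiv.Perm (Fin m) →* Matrix (Fin e) (Fin e) ℂ)
    (i j : Fin e) : Mat d m :=
  ((e : ℂ) / (Nat.factorial m : ℂ)) •
    ∑ τ : Equiv.Perm (Fin m), φ τ⁻¹ j i • Vperm d m τ

/-- Young projector `P_μ = Σ_i E^μ_{ii}`. -/
def Pop (d m : ℕ) {e : ℕ} (φ : Equiv.Perm (Fin m) →* Matrix (Fin e) (Fin e) ℂ) : Mat d m :=
  ∑ i : Fin e, Eop d m φ i i

/-- Schur–Weyl multiplicity `m_μ = tr(P_μ)/d_μ` (a real number). -/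
def multSW (d m : ℕ) {e : ℕ} (φ : Equiv.Perm (Fin m) →* Matrix (Fin e) (Fin e) ℂ) : ℝ :=
  (Matrix.trace (Pop d m φ)).re / (e : ℝ)

/-- A family of concrete unitary irreducible matrix representations of `S(a)`. -/
structure IrrepFamily (a : ℕ) where
  Label : Type
  [instFintype : Fintype Label]
  [instDecEq : DecidableEq Label]
  dim : Label → ℕ
  dim_pos : ∀ ℓ, 0 < dim ℓ
  rep : ∀ ℓ, Equiv.Perm (Fin a) →* Matrix (Fin (dim ℓ)) (Fin (dim ℓ)) ℂ
  irrep : ∀ ℓ, IsUnitaryIrrep (rep ℓ)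

attribute [instance] IrrepFamily.instFintype IrrepFamily.instDecEq

/-- An irreducible unitary representation of `S(a+k)` in PRIR form relative to the chain
`S(a+k) ⊃ ⋯ ⊃ S(a)`: the restriction to `S(a)` is block diagonal, the blocks being
indexed by branching paths, the block of every path ending at the irrep `α` of `S(a)`
being one and the same fixed matrix irrep `Φ.rep α`. -/
structure PRIRData (a k : ℕ) (Φ : IrrepFamily a) (e : ℕ) where
  rep : Equiv.Perm (Fin (a + k)) →* Matrix (Fin e) (Fin e) ℂ
  irrep : IsUnitaryIrrep rep
  Path : Type
  [instFintypePath : Fintype Path]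
  [instDecEqPath : DecidableEq Path]
  endOf : Path → Φ.Label
  basis : ((r : Path) × Fin (Φ.dim (endOf r))) ≃ Fin e
  block_diag : ∀ (h : Equiv.Perm (Fin a)) (r : Path) (l l' : Fin (Φ.dim (endOf r))),
      rep (permExt (Nat.le_add_right a k) h) (basis ⟨r, l⟩) (basis ⟨r, l'⟩)
        = Φ.rep (endOf r) h l l'
  block_off : ∀ (h : Equiv.Perm (Fin a)) (r r' : Path), r ≠ r' →
      ∀ (l : Fin (Φ.dim (endOf r))) (l' : Fin (Φ.dim (endOf r'))),
      rep (permExt (Nat.le_add_right a k) h) (basis ⟨r, l⟩) (basis ⟨r', l'⟩) = 0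

attribute [instance] PRIRData.instFintypePath PRIRData.instDecEqPath

/-- The number of paths `m_{μ/α}`, i.e. the multiplicity of `α` in the restriction. -/
def PRIRData.pathMult {a k : ℕ} {Φ : IrrepFamily a} {e : ℕ}
    (P : PRIRData a k Φ e) (α : Φ.Label) : ℕ :=
  Fintype.card {r : P.Path // P.endOf r = α}

/-- The basis operators
`F^{r_{μ/α} r_{ν/α}}_{i_μ j_ν} = (m_α/√(m_μ m_ν)) E^μ_{i_μ,(r,1_α)} V^{(k)} E^ν_{(s,1_α),j_ν}`. -/
def Fop (d a k : ℕ) (Φ : IrrepFamily a) {e e' : ℕ}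
    (P : PRIRData a k Φ e) (Q : PRIRData a k Φ e')
    (r : P.Path) (s : Q.Path) (i : Fin e) (j : Fin e') : Mat d (a + k + k) :=
  ((multSW d a (Φ.rep (P.endOf r)) /
      Real.sqrt (multSW d (a + k) P.rep * multSW d (a + k) Q.rep) : ℝ) : ℂ) •
    (extOp (Nat.le_add_right (a + k) k)
        (Eop d (a + k) P.rep i (P.basis ⟨r, ⟨0, Φ.dim_pos _⟩⟩)) *
      Vk d a k *
      extOp (Nat.le_add_right (a + k) k)
        (Eop d (a + k) Q.rep (Q.basis ⟨s, ⟨0, Φ.dim_pos _⟩⟩) j))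

/-- The projectors `F_μ(α) = Σ_{r_{μ/α}} Σ_{k_μ} F^{r r}_{k k}`. -/
def Fproj (d a k : ℕ) (Φ : IrrepFamily a) {e : ℕ}
    (P : PRIRData a k Φ e) (α : Φ.Label) : Mat d (a + k + k) :=
  ∑ r : {r : P.Path // P.endOf r = α}, ∑ i : Fin e, Fop d a k Φ P P r.1 r.1 i i

/-- Eigenvalues `λ_μ(α) = (k!·C(N,k)/d^N)·(m_μ d_α)/(m_α d_μ)` of the MPBT operator. -/
def lambdaEig (d a k : ℕ) (Φ : IrrepFamily a) {e : ℕ}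
    (P : PRIRData a k Φ e) (α : Φ.Label) : ℝ :=
  ((Nat.factorial k * Nat.choose (a + k) k : ℝ) / (d : ℝ) ^ (a + k)) *
    (multSW d (a + k) P.rep * (Φ.dim α : ℝ)) / (multSW d a (Φ.rep α) * (e : ℝ))

/-- A family of irreps of `S(a+k)` in PRIR form relative to `Φ`, one chosen
representative for each isomorphism class (pairwise non-isomorphic and complete). -/
structure PRIRFamily (a k : ℕ) (Φ : IrrepFamily a) where
  Label : Type
  [instFintype : Fintype Label]
  [instDecEq : DecidableEq Label]
  dim : Label → ℕ
  prir : ∀ ℓ, PRIRData a k Φ (dim ℓ)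
  noniso : ∀ ℓ ℓ', ℓ ≠ ℓ' → ∀ T : Matrix (Fin (dim ℓ)) (Fin (dim ℓ')) ℂ,
      (∀ σ, (prir ℓ).rep σ * T = T * (prir ℓ').rep σ) → T = 0
  complete : ∀ (e : ℕ) (ψ : Equiv.Perm (Fin (a + k)) →* Matrix (Fin e) (Fin e) ℂ),
      IsUnitaryIrrep ψ → ∃ ℓ, ∃ T : Matrix (Fin (dim ℓ)) (Fin e) ℂ,
        ∃ T' : Matrix (Fin e) (Fin (dim ℓ)) ℂ,
          T * T' = 1 ∧ T' * T = 1 ∧ ∀ σ, (prir ℓ).rep σ * T = T * ψ σ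

attribute [instance] PRIRFamily.instFintype PRIRFamily.instDecEq

/-- The signal states `σ_i` of the MPBT scheme, for a tuple `v` of (distinct) ports:
the ports are factors `0,…,a+k-1` and `B̃_j` (resp. `C_j`) is factor `a+k+j`. -/
def sigmaOp (d a k : ℕ) (v : Fin k → Fin (a + k)) : Mat d (a + k + k) :=
  ((1 : ℂ) / (d : ℂ) ^ a) •
    ((List.finRange k).map fun j : Fin k =>
      Pplus d (a + k + k) (Fin.castLE (Nat.le_add_right (a + k) k) (v j))
        ⟨a + k + (j : ℕ), by have := j.isLt; omega⟩).prod

/-- The MPBT operator `ρ = Σ_{i ∈ I} σ_i`. -/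
def rhoOp (d a k : ℕ) : Mat d (a + k + k) :=
  ∑ v : {v : Fin k → Fin (a + k) // Function.Injective v}, sigmaOp d a k v.1

/-- `P⁺_{A_i,C}`, tensored with the identity on the remaining ports. -/
def PplusTuple (d a k : ℕ) (v : Fin k → Fin (a + k)) : Mat d (a + k + k) :=
  ((List.finRange k).map fun j : Fin k =>
    Pplus d (a + k + k) (Fin.castLE (Nat.le_add_right (a + k) k) (v j))
      ⟨a + k + (j : ℕ), by have := j.isLt; omega⟩).prod

/-- The increasing enumeration of the ports not appearing in `v`. -/
def compEnum {a k : ℕ} (v : Fin k → Fin (a + k)) (hv : Function.Injective v) :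
    Fin a → Fin (a + k) := fun i =>
  (((Finset.image v Finset.univ)ᶜ.orderIsoOfFin (by
      rw [Finset.card_compl, Finset.card_image_of_injective _ hv, Finset.card_univ,
        Fintype.card_fin, Fintype.card_fin]
      omega)) i).1

/-- Placement of an operator on the tensor factors enumerated by `w`,
tensored with the identity on the remaining factors. -/
def placeOp {d a n : ℕ} (w : Fin a → Fin n) (X : Mat d a) : Mat d n :=
  Matrix.of fun f g =>
    if ∀ i : Fin n, (∀ j, w j ≠ i) → f i = g i
    then X (fun j => f (w j)) (fun j => g (w j)) else 0

/-- `U^{⊗N} ⊗ Ū^{⊗k}`. -/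
def Upow (d N k : ℕ) (U : Matrix (Fin d) (Fin d) ℂ) : Mat d (N + k) :=
  Matrix.of fun f g =>
    ∏ i : Fin (N + k),
      if (i : ℕ) < N then U (f i) (g i) else (starRingEnd ℂ) (U (f i) (g i))

/-- A family of concrete unitary irreps of a subgroup `H ⊆ S(n)`. -/
structure SubIrrepFamily (n : ℕ) (H : Subgroup (Equiv.Perm (Fin n))) where
  Label : Type
  [instFintype : Fintype Label]
  [instDecEq : DecidableEq Label]
  dim : Label → ℕ
  rep : ∀ ℓ, H →* Matrix (Fin (dim ℓ)) (Fin (dim ℓ)) ℂ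
  irrep : ∀ ℓ, IsUnitaryIrrep (rep ℓ)

attribute [instance] SubIrrepFamily.instFintype SubIrrepFamily.instDecEq

/-- An irrep of `S(n)` whose basis is adapted to the subgroup `H` (PRIR form). -/
structure PRIRSubData (n : ℕ) (H : Subgroup (Equiv.Perm (Fin n)))
    (Ψ : SubIrrepFamily n H) (e : ℕ) where
  rep : Equiv.Perm (Fin n) →* Matrix (Fin e) (Fin e) ℂ
  irrep : IsUnitaryIrrep rep
  Path : Type
  [instFintypePath : Fintype Path]
  [instDecEqPath : DecidableEq Path]
  endOf : Path → Ψ.Label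
  basis : ((r : Path) × Fin (Ψ.dim (endOf r))) ≃ Fin e
  block_diag : ∀ (h : H) (r : Path) (l l' : Fin (Ψ.dim (endOf r))),
      rep (h : Equiv.Perm (Fin n)) (basis ⟨r, l⟩) (basis ⟨r, l'⟩) = Ψ.rep (endOf r) h l l'
  block_off : ∀ (h : H) (r r' : Path), r ≠ r' →
      ∀ (l : Fin (Ψ.dim (endOf r))) (l' : Fin (Ψ.dim (endOf r'))),
      rep (h : Equiv.Perm (Fin n)) (basis ⟨r, l⟩) (basis ⟨r', l'⟩) = 0

attribute [instance] PRIRSubData.instFintypePath PRIRSubData.instDecEqPath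

/-- A family of pairwise non-isomorphic irreps of `S(n)` in PRIR form relative to `H`. -/
structure PRIRSubFamily (n : ℕ) (H : Subgroup (Equiv.Perm (Fin n)))
    (Ψ : SubIrrepFamily n H) where
  Label : Type
  [instFintype : Fintype Label]
  [instDecEq : DecidableEq Label]
  dim : Label → ℕ
  prir : ∀ ℓ, PRIRSubData n H Ψ (dim ℓ)
  noniso : ∀ ℓ ℓ', ℓ ≠ ℓ' → ∀ T : Matrix (Fin (dim ℓ)) (Fin (dim ℓ')) ℂ,
      (∀ σ, (prir ℓ).rep σ * T = T * (prir ℓ').rep σ) → T = 0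

attribute [instance] PRIRSubFamily.instFintype PRIRSubFamily.instDecEq

end


noncomputable section Aux

lemma Vperm_mul_apply (d n : ℕ) (σ : Equiv.Perm (Fin n)) (X : Mat d n) (f g : Fin n → Fin d) :
    (Vperm d n σ * X) f g = X (f ∘ σ) g := by
  simp [Vperm, Matrix.mul_apply, ite_mul]

lemma mul_Vperm_apply (d n : ℕ) (σ : Equiv.Perm (Fin n)) (X : Mat d n) (f g : Fin n → Fin d) :
    (X * Vperm d n σ) f g = X f (g ∘ ⇑σ⁻¹) := by
  have h : ∀ h : Fin n → Fin d, (h ∘ σ = g) ↔ (h = g ∘ ⇑σ⁻¹) := by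
    intro h
    constructor
    · intro hh; funext i; simp [← hh]
    · intro hh; funext i; simp [hh]
  simp only [Vperm, Matrix.mul_apply, Matrix.of_apply, h, mul_ite, mul_one, mul_zero]
  simp

/-- closed form for products of disjoint `Pplus` -/
def cf (d n : ℕ) {ι : Type*} (l : List ι) (r s : ι → Fin n) : Mat d n :=
  Matrix.of fun f g =>
    if (∀ j ∈ l, f (r j) = f (s j) ∧ g (r j) = g (s j)) ∧
        (∀ t, (∀ j ∈ l, t ≠ r j ∧ t ≠ s j) → f t = g t)
    then ((1 : ℂ) / d) ^ l.length else 0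

lemma cf_prod (d n : ℕ) {ι : Type*} (r s : ι → Fin n) (l : List ι)
    (hrs : ∀ j ∈ l, r j ≠ s j)
    (hpw : l.Pairwise fun j j' => r j ≠ r j' ∧ r j ≠ s j' ∧ s j ≠ r j' ∧ s j ≠ s j') :
    (l.map fun j => Pplus d n (r j) (s j)).prod = cf d n l r s := by
  induction l with
  | nil =>
    ext f g
    simp only [List.map_nil, List.prod_nil, cf, Matrix.of_apply, List.length_nil, pow_zero,
      List.not_mem_nil, false_implies, implies_true, true_and, Matrix.one_apply]
    congr 1
    simp only [eq_iff_iff, funext_iff]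
    constructor
    · intro h t _; exact h t
    · intro h t; exact h t (by simp)
  | cons j0 l ih =>
    have hrs0 := hrs j0 (by simp)
    have hdisj : ∀ j ∈ l, r j ≠ r j0 ∧ r j ≠ s j0 ∧ s j ≠ r j0 ∧ s j ≠ s j0 := by
      intro j hj
      have h := (List.pairwise_cons.mp hpw).1 j hj
      exact ⟨h.1.symm, h.2.2.1.symm, h.2.1.symm, h.2.2.2.symm⟩
    have ihl := ih (fun j hj => hrs j (by simp [hj])) (List.pairwise_cons.mp hpw).2
    ext f g
    rw [List.map_cons, List.prod_cons, Matrix.mul_apply]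
    simp only [ihl]
    set h0 : Fin n → Fin d := fun t => if t = r j0 ∨ t = s j0 then g (r j0) else f t with hh0
    have S1 : ∀ h : Fin n → Fin d, h ≠ h0 →
        Pplus d n (r j0) (s j0) f h * cf d n l r s h g = 0 := by
      intro h he
      by_contra hz
      apply he
      have hz1 : Pplus d n (r j0) (s j0) f h ≠ 0 := left_ne_zero_of_mul hz
      have hz2 : cf d n l r s h g ≠ 0 := right_ne_zero_of_mul hz
      rw [Pplus, Matrix.of_apply, ne_eq, ite_eq_right_iff, not_forall] at hz1
      obtain ⟨⟨p1, p2, p3⟩, -⟩ := hz1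
      rw [cf, Matrix.of_apply, ne_eq, ite_eq_right_iff, not_forall] at hz2
      obtain ⟨⟨c1, c2⟩, -⟩ := hz2
      have hr0 : h (r j0) = g (r j0) := by
        refine c2 (r j0) ?_
        intro j hj
        exact ⟨(hdisj j hj).1.symm, (hdisj j hj).2.2.1.symm⟩
      funext t
      by_cases ht : t = r j0 ∨ t = s j0
      · rcases ht with ht | ht <;> subst ht
        · simp only [hh0]; simp only [true_or, if_true]; exact hr0
        · simp only [hh0]; simp only [or_true, if_true]; rw [← hr0, ← p2]
      · push_neg at ht
        simp only [hh0, if_neg (not_or.mpr ht)]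
        exact (p3 t ht.1 ht.2).symm
    rw [Finset.sum_eq_single_of_mem h0 (Finset.mem_univ _)
      (fun h _ hne => S1 h hne)]
    by_cases hc : (∀ j ∈ (j0 :: l), f (r j) = f (s j) ∧ g (r j) = g (s j)) ∧
        (∀ t, (∀ j ∈ (j0 :: l), t ≠ r j ∧ t ≠ s j) → f t = g t)
    · obtain ⟨hc1, hc2⟩ := hc
      obtain ⟨⟨h1, h2⟩, h3⟩ := List.forall_mem_cons.mp hc1
      have e1 : Pplus d n (r j0) (s j0) f h0 = (1:ℂ)/d := by
        rw [Pplus, Matrix.of_apply, if_pos]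
        refine ⟨h1, ?_, ?_⟩
        · simp only [hh0]; simp only [true_or, or_true, if_true]
        · intro t ht1 ht2
          simp only [hh0, if_neg (not_or.mpr ⟨ht1, ht2⟩)]
      have e2 : cf d n l r s h0 g = ((1:ℂ)/d) ^ l.length := by
        rw [cf, Matrix.of_apply, if_pos]
        constructor
        · intro j hj
          have hd := hdisj j hj
          constructor
          · simp only [hh0, if_neg (not_or.mpr ⟨hd.1, hd.2.1⟩),
              if_neg (not_or.mpr ⟨hd.2.2.1, hd.2.2.2⟩)]
            exact (h3 j hj).1
          · exact (h3 j hj).2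
        · intro t ht
          by_cases h5 : t = r j0 ∨ t = s j0
          · rcases h5 with h5 | h5 <;> subst h5
            · simp only [hh0]; simp only [true_or, if_true]
            · simp only [hh0]; simp only [or_true, if_true]; rw [← h2]
          · push_neg at h5
            simp only [hh0, if_neg (not_or.mpr h5)]
            refine hc2 t (List.forall_mem_cons.mpr ⟨h5, ht⟩)
      rw [e1, e2, cf, Matrix.of_apply, if_pos ⟨hc1, hc2⟩, List.length_cons, pow_succ]
      ring
    · have hR : cf d n (j0 :: l) r s f g = 0 := by
        rw [cf, Matrix.of_apply]; exact if_neg hc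
      rw [hR]
      by_contra hz
      apply hc
      have hz1 : Pplus d n (r j0) (s j0) f h0 ≠ 0 := left_ne_zero_of_mul hz
      have hz2 : cf d n l r s h0 g ≠ 0 := right_ne_zero_of_mul hz
      rw [Pplus, Matrix.of_apply, ne_eq, ite_eq_right_iff, not_forall] at hz1
      obtain ⟨⟨p1, p2, p3⟩, -⟩ := hz1
      rw [cf, Matrix.of_apply, ne_eq, ite_eq_right_iff, not_forall] at hz2
      obtain ⟨⟨c1, c2⟩, -⟩ := hz2
      have hg0 : g (r j0) = g (s j0) := by
        have := c2 (s j0) (fun j hj => ⟨(hdisj j hj).2.1.symm, (hdisj j hj).2.2.2.symm⟩)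
        simp only [hh0, or_true, if_true] at this
        exact this
      constructor
      · refine List.forall_mem_cons.mpr ⟨⟨p1, hg0⟩, ?_⟩
        intro j hj
        have hd := hdisj j hj
        have := c1 j hj
        simp only [hh0, if_neg (not_or.mpr ⟨hd.1, hd.2.1⟩),
          if_neg (not_or.mpr ⟨hd.2.2.1, hd.2.2.2⟩)] at this
        exact this
      · intro t ht
        obtain ⟨ht0, htl⟩ := List.forall_mem_cons.mp ht
        have := c2 t htl
        simp only [hh0, if_neg (not_or.mpr ht0)] at this
        rw [← this]

lemma pairwise_finRange {k : ℕ} (R : Fin k → Fin k → Prop)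
    (h : ∀ i j : Fin k, (i : ℕ) < (j : ℕ) → R i j) : (List.finRange k).Pairwise R := by
  rw [List.pairwise_iff_get]
  intro i j hij
  refine h _ _ ?_
  rw [List.get_finRange, List.get_finRange]
  simpa using hij

lemma permExt_apply_lt {m n : ℕ} (hmn : m ≤ n) (h : Equiv.Perm (Fin m)) (i : Fin n)
    (hi : (i : ℕ) < m) :
    permExt hmn h i = Fin.castLE hmn (h ⟨(i : ℕ), hi⟩) := by
  rw [permExt, h.extendDomain_apply_subtype (finLtEquiv hmn) hi]
  rfl

lemma permExt_apply_ge {m n : ℕ} (hmn : m ≤ n) (h : Equiv.Perm (Fin m)) (i : Fin n)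
    (hi : m ≤ (i : ℕ)) :
    permExt hmn h i = i := by
  rw [permExt, Equiv.Perm.extendDomain_apply_not_subtype _ _ (by omega)]

lemma permExt_inv {m n : ℕ} (hmn : m ≤ n) (h : Equiv.Perm (Fin m)) :
    permExt hmn h⁻¹ = (permExt hmn h)⁻¹ :=
  (Equiv.Perm.extendDomain_inv _ _).symm

/-- the reversal permutation of `Fin k` -/
def revP (k : ℕ) : Equiv.Perm (Fin k) where
  toFun j := ⟨k - 1 - (j : ℕ), by have := j.isLt; omega⟩
  invFun j := ⟨k - 1 - (j : ℕ), by have := j.isLt; omega⟩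
  left_inv j := by
    ext
    show k - 1 - (k - 1 - (j : ℕ)) = (j : ℕ)
    have := j.isLt; omega
  right_inv j := by
    ext
    show k - 1 - (k - 1 - (j : ℕ)) = (j : ℕ)
    have := j.isLt; omega

lemma cf_comp_equiv (d n k : ℕ) (e : Equiv.Perm (Fin k)) (r s : Fin k → Fin n) :
    cf d n (List.finRange k) (r ∘ e) (s ∘ e) = cf d n (List.finRange k) r s := by
  unfold cf
  ext f g
  simp only [Matrix.of_apply, List.mem_finRange, true_implies, Function.comp_apply]
  congr 1
  simp only [eq_iff_iff]
  constructor
  · rintro ⟨h1, h2⟩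
    refine ⟨fun j => ?_, fun t ht => h2 t fun j => ht (e j)⟩
    have := h1 (e.symm j)
    simpa using this
  · rintro ⟨h1, h2⟩
    exact ⟨fun j => h1 (e j), fun t ht => h2 t fun j => by simpa using ht (e.symm j)⟩

lemma sigmaOp_eq_cf (d a k : ℕ) (v : Fin k → Fin (a + k)) (hv : Function.Injective v) :
    sigmaOp d a k v = ((1 : ℂ) / (d : ℂ) ^ a) •
      cf d (a + k + k) (List.finRange k)
        (fun j => Fin.castLE (Nat.le_add_right (a + k) k) (v j))
        (fun j => ⟨a + k + (j : ℕ), by have := j.isLt; omega⟩) := by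
  rw [sigmaOp, cf_prod]
  · intro j _
    apply Fin.ne_of_val_ne
    simp only [Fin.coe_castLE]
    have := (v j).isLt
    omega
  · apply pairwise_finRange
    intro i j hij
    have hvij : v i ≠ v j := fun hh => absurd (hv hh) (by omega)
    refine ⟨?_, ?_, ?_, ?_⟩
    · intro hh
      apply hvij
      apply Fin.ext
      have : ((Fin.castLE (Nat.le_add_right (a+k) k) (v i) : Fin (a+k+k)) : ℕ)
          = ((Fin.castLE (Nat.le_add_right (a+k) k) (v j) : Fin (a+k+k)) : ℕ) := by rw [hh]
      simpa using this
    · apply Fin.ne_of_val_ne; simp only [Fin.coe_castLE]; have := (v i).isLt; omega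
    · apply Fin.ne_of_val_ne; simp only [Fin.coe_castLE]; have := (v j).isLt; omega
    · apply Fin.ne_of_val_ne; simp only []; omega

lemma Vk_eq_cf (d a k : ℕ) :
    Vk d a k = ((d : ℂ) ^ k) •
      cf d (a + k + k) (List.finRange k)
        (fun j => ⟨a + (j : ℕ), by have := j.isLt; omega⟩)
        (fun j => ⟨a + k + k - 1 - (j : ℕ), by have := j.isLt; omega⟩) := by
  rw [Vk, cf_prod]
  · intro j _
    apply Fin.ne_of_val_ne
    simp only []
    have := j.isLt
    omega
  · apply pairwise_finRange
    intro i j hij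
    have hi := i.isLt
    have hj := j.isLt
    refine ⟨?_, ?_, ?_, ?_⟩ <;> (apply Fin.ne_of_val_ne; simp only []; omega)

lemma conj_cf (d n : ℕ) {ι : Type*} (π : Equiv.Perm (Fin n)) (l : List ι) (r s : ι → Fin n) :
    Vperm d n π⁻¹ * cf d n l r s * Vperm d n π
      = cf d n l (fun j => π⁻¹ (r j)) (fun j => π⁻¹ (s j)) := by
  ext f g
  rw [mul_Vperm_apply, Vperm_mul_apply]
  unfold cf
  simp only [Matrix.of_apply, Function.comp_apply]
  congr 1
  simp only [eq_iff_iff]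
  constructor
  · rintro ⟨h1, h2⟩
    refine ⟨h1, fun t ht => ?_⟩
    have h3 := h2 (π t) (fun j hj =>
      ⟨fun hh => (ht j hj).1 (by rw [← hh, Equiv.Perm.coe_inv, Equiv.symm_apply_apply]),
       fun hh => (ht j hj).2 (by rw [← hh, Equiv.Perm.coe_inv, Equiv.symm_apply_apply])⟩)
    simpa using h3
  · rintro ⟨h1, h2⟩
    refine ⟨h1, fun t ht => ?_⟩
    refine h2 (π⁻¹ t) fun j hj =>
      ⟨fun hh => (ht j hj).1 (π⁻¹.injective hh),
       fun hh => (ht j hj).2 (π⁻¹.injective hh)⟩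

lemma exists_perm_map {N k : ℕ} (v u : Fin k → Fin N) (hv : Function.Injective v)
    (hu : Function.Injective u) :
    ∃ σ : Equiv.Perm (Fin N), ∀ j, σ (v j) = u j := by
  classical
  let e : {x : Fin N // x ∈ Set.range v} ≃ {x : Fin N // x ∈ Set.range u} :=
    (Equiv.ofInjective v hv).symm.trans (Equiv.ofInjective u hu)
  refine ⟨e.extendSubtype, fun j => ?_⟩
  rw [Equiv.extendSubtype_apply_of_mem e (v j) ⟨j, rfl⟩]
  have h1 : (⟨v j, ⟨j, rfl⟩⟩ : {x : Fin N // x ∈ Set.range v}) = Equiv.ofInjective v hv j := by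
    apply Subtype.ext
    simp
  simp only [e, Equiv.trans_apply, h1, Equiv.symm_apply_apply]
  simp

lemma exists_permExt_of_fix {a k : ℕ} (g : Equiv.Perm (Fin (a + k)))
    (hg : ∀ i : Fin (a + k), a ≤ (i : ℕ) → g i = i) :
    ∃ h : Equiv.Perm (Fin a), g = permExt (Nat.le_add_right a k) h := by
  have hg' : ∀ i : Fin (a + k), a ≤ (i : ℕ) → g⁻¹ i = i := by
    intro i hi
    have := hg i hi
    conv_lhs => rw [← this]
    simp
  have hlow : ∀ i : Fin (a + k), (i : ℕ) < a → ((g i : Fin (a + k)) : ℕ) < a := by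
    intro i hi
    by_contra hc
    push_neg at hc
    have h1 := hg (g i) hc
    have h2 := g.injective h1
    rw [h2] at hc
    omega
  have hlow' : ∀ i : Fin (a + k), (i : ℕ) < a → ((g⁻¹ i : Fin (a + k)) : ℕ) < a := by
    intro i hi
    by_contra hc
    push_neg at hc
    have h1 := hg' (g⁻¹ i) hc
    have h2 := g⁻¹.injective h1
    rw [h2] at hc
    omega
  have hle : a ≤ a + k := Nat.le_add_right a k
  refine ⟨⟨fun i => ⟨((g (Fin.castLE hle i)) : ℕ), hlow _ (by simp)⟩,
    fun i => ⟨((g⁻¹ (Fin.castLE hle i)) : ℕ), hlow' _ (by simp)⟩, ?_, ?_⟩, ?_⟩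
  · intro i
    apply Fin.ext
    show ((g⁻¹ (Fin.castLE hle ⟨((g (Fin.castLE hle i)) : ℕ), _⟩) : Fin (a+k)) : ℕ) = (i : ℕ)
    have he : Fin.castLE hle (⟨((g (Fin.castLE hle i)) : ℕ), hlow _ (by simp)⟩ : Fin a)
        = g (Fin.castLE hle i) := by
      apply Fin.ext; rfl
    rw [he, Equiv.Perm.coe_inv, Equiv.symm_apply_apply]
    rfl
  · intro i
    apply Fin.ext
    show ((g (Fin.castLE hle ⟨((g⁻¹ (Fin.castLE hle i)) : ℕ), _⟩) : Fin (a+k)) : ℕ) = (i : ℕ)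
    have he : Fin.castLE hle (⟨((g⁻¹ (Fin.castLE hle i)) : ℕ), hlow' _ (by simp)⟩ : Fin a)
        = g⁻¹ (Fin.castLE hle i) := by
      apply Fin.ext; rfl
    rw [he, Equiv.Perm.coe_inv, Equiv.apply_symm_apply]
    rfl
  · apply Equiv.ext
    intro i
    by_cases hi : (i : ℕ) < a
    · rw [permExt_apply_lt hle _ i hi]
      apply Fin.ext
      show ((g i : Fin (a+k)) : ℕ) = ((g (Fin.castLE hle (⟨(i : ℕ), hi⟩ : Fin a)) : Fin (a+k)) : ℕ)
      have he : Fin.castLE hle (⟨(i : ℕ), hi⟩ : Fin a) = i := by apply Fin.ext; rfl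
      rw [he]
    · push_neg at hi
      rw [permExt_apply_ge hle _ i hi, hg i hi]

lemma Vperm_one (d n : ℕ) : Vperm d n 1 = 1 := by
  ext f g
  simp only [Vperm, Matrix.of_apply, Equiv.Perm.coe_one, Function.comp_id, Matrix.one_apply]
  exact if_congr Iff.rfl rfl rfl

lemma conj_Vk (d a k : ℕ) (hd : 2 ≤ d) (hk : 1 ≤ k) (τ : Equiv.Perm (Fin (a + k))) :
    ((1 : ℂ) / (d : ℂ) ^ (a + k)) •
        (Vperm d (a + k + k) (permExt (Nat.le_add_right (a + k) k) τ⁻¹) *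
          Vk d a k *
          Vperm d (a + k + k) (permExt (Nat.le_add_right (a + k) k) τ))
      = sigmaOp d a k
          (fun j : Fin k => τ⁻¹ ⟨a + k - 1 - (j : ℕ), by have := j.isLt; omega⟩) := by
  have hdn : (d : ℂ) ≠ 0 := Nat.cast_ne_zero.mpr (by omega)
  have hinj : Function.Injective
      (fun j : Fin k => τ⁻¹ (⟨a + k - 1 - (j : ℕ), by have := j.isLt; omega⟩ : Fin (a+k))) := by
    intro x y h
    have h2 := τ⁻¹.injective h
    have h3 := congrArg Fin.val h2
    simp only [] at h3
    have hx := x.isLt; have hy := y.isLt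
    apply Fin.ext
    omega
  rw [Vk_eq_cf, Matrix.mul_smul, Matrix.smul_mul, smul_smul, permExt_inv, conj_cf,
    sigmaOp_eq_cf d a k _ hinj]
  have hle : a + k ≤ a + k + k := Nat.le_add_right (a + k) k
  have ecf : cf d (a + k + k) (List.finRange k)
        (fun j => (permExt hle τ)⁻¹ (⟨a + (j : ℕ), by have := j.isLt; omega⟩ : Fin (a+k+k)))
        (fun j => (permExt hle τ)⁻¹
            (⟨a + k + k - 1 - (j : ℕ), by have := j.isLt; omega⟩ : Fin (a+k+k)))
      = cf d (a + k + k) (List.finRange k)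
        (fun j => Fin.castLE hle
          (τ⁻¹ (⟨a + k - 1 - (j : ℕ), by have := j.isLt; omega⟩ : Fin (a+k))))
        (fun j => (⟨a + k + (j : ℕ), by have := j.isLt; omega⟩ : Fin (a+k+k))) := by
    have er : ((fun j : Fin k => Fin.castLE hle
          (τ⁻¹ (⟨a + k - 1 - (j : ℕ), by have := j.isLt; omega⟩ : Fin (a+k)))) ∘ ⇑(revP k))
        = fun j : Fin k =>
            (permExt hle τ)⁻¹ (⟨a + (j : ℕ), by have := j.isLt; omega⟩ : Fin (a+k+k)) := by
      funext j
      have hj := j.isLt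
      simp only [Function.comp_apply]
      rw [← permExt_inv, permExt_apply_lt hle τ⁻¹ _ (show a + (j : ℕ) < a + k by omega)]
      have hrv : ((revP k j : Fin k) : ℕ) = k - 1 - (j : ℕ) := rfl
      have hxy : (⟨a + k - 1 - ((revP k j : Fin k) : ℕ),
            by have := (revP k j).isLt; omega⟩ : Fin (a+k))
          = ⟨a + (j : ℕ), by omega⟩ := by
        apply Fin.ext
        show a + k - 1 - ((revP k j : Fin k) : ℕ) = a + (j : ℕ)
        omega
      exact congrArg (fun x => Fin.castLE hle (τ⁻¹ x)) hxy
    have es : ((fun j : Fin k =>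
            (⟨a + k + (j : ℕ), by have := j.isLt; omega⟩ : Fin (a+k+k))) ∘ ⇑(revP k))
        = fun j : Fin k => (permExt hle τ)⁻¹
            (⟨a + k + k - 1 - (j : ℕ), by have := j.isLt; omega⟩ : Fin (a+k+k)) := by
      funext j
      have hj := j.isLt
      simp only [Function.comp_apply]
      rw [← permExt_inv,
        permExt_apply_ge hle τ⁻¹ _ (show a + k ≤ a + k + k - 1 - (j : ℕ) by omega)]
      have hrv : ((revP k j : Fin k) : ℕ) = k - 1 - (j : ℕ) := rfl
      apply Fin.ext
      show a + k + ((revP k j : Fin k) : ℕ) = a + k + k - 1 - (j : ℕ)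
      omega
    rw [← cf_comp_equiv d (a + k + k) k (revP k)
      (fun j => Fin.castLE hle
        (τ⁻¹ (⟨a + k - 1 - (j : ℕ), by have := j.isLt; omega⟩ : Fin (a+k))))
      (fun j => (⟨a + k + (j : ℕ), by have := j.isLt; omega⟩ : Fin (a+k+k))), er, es]
  rw [ecf]
  congr 1
  rw [pow_add]
  field_simp

end Aux


/-- For a transversal `T` of the right cosets of `S(N-k)` in `S(N)`
(acting on the ports): (i) `τ ↦ (τ⁻¹(N),…,τ⁻¹(N-k+1))` is a bijection from `T` onto `I`;
(ii) `σ_{(N,N-1,…,N-k+1)} = (1/d^N)·V^{(k)}`;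
(iii) `ρ = Σ_{i∈I} σ_i = (1/d^N)·Σ_{τ∈T} V_{τ⁻¹}·V^{(k)}·V_τ`.
Here `N = a + k` and `n = N + k = a + k + k`; ports are 0-indexed. -/
theorem statement_1 (d a k : ℕ) (hd : 2 ≤ d) (hk : 1 ≤ k) (hka : k ≤ a)
    (hN : 2 ≤ a + k)
    (T : Finset (Equiv.Perm (Fin (a + k))))
    (hT : ∀ σ : Equiv.Perm (Fin (a + k)),
      ∃! τ, τ ∈ T ∧ ∃ h : Equiv.Perm (Fin a),
        σ = permExt (Nat.le_add_right a k) h * τ) :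
    Set.BijOn
      (fun τ : Equiv.Perm (Fin (a + k)) => fun j : Fin k =>
        τ⁻¹ ⟨a + k - 1 - (j : ℕ), by have := j.isLt; omega⟩)
      ↑T {v : Fin k → Fin (a + k) | Function.Injective v}
    ∧ sigmaOp d a k
        (fun j : Fin k => ⟨a + k - 1 - (j : ℕ), by have := j.isLt; omega⟩)
        = ((1 : ℂ) / (d : ℂ) ^ (a + k)) • Vk d a k
    ∧ rhoOp d a k
        = ((1 : ℂ) / (d : ℂ) ^ (a + k)) •
          ∑ τ ∈ T,
            Vperm d (a + k + k) (permExt (Nat.le_add_right (a + k) k) τ⁻¹) *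
              Vk d a k *
              Vperm d (a + k + k) (permExt (Nat.le_add_right (a + k) k) τ) := by
  have hle : a + k ≤ a + k + k := Nat.le_add_right (a + k) k
  have hu_inj : Function.Injective
      (fun j : Fin k => (⟨a + k - 1 - (j : ℕ), by have := j.isLt; omega⟩ : Fin (a + k))) := by
    intro x y h
    have h3 := congrArg Fin.val h
    simp only [] at h3
    have hx := x.isLt; have hy := y.isLt
    apply Fin.ext
    omega
  have hF_inj : ∀ τ : Equiv.Perm (Fin (a + k)), Function.Injective
      (fun j : Fin k => τ⁻¹ (⟨a + k - 1 - (j : ℕ), by have := j.isLt; omega⟩ : Fin (a + k))) :=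
    fun τ x y h => hu_inj (τ⁻¹.injective h)
  have hinjOn : Set.InjOn (fun τ : Equiv.Perm (Fin (a + k)) => fun j : Fin k =>
      τ⁻¹ ⟨a + k - 1 - (j : ℕ), by have := j.isLt; omega⟩) ↑T := by
    intro τ hτ τ' hτ' heq
    have hg : ∀ i : Fin (a + k), a ≤ (i : ℕ) → (τ * τ'⁻¹) i = i := by
      intro i hi
      have hik := i.isLt
      have hui : (⟨a + k - 1 - ((⟨a + k - 1 - (i : ℕ), by omega⟩ : Fin k) : ℕ),
          by omega⟩ : Fin (a + k)) = i := by
        apply Fin.ext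
        show a + k - 1 - (a + k - 1 - (i : ℕ)) = (i : ℕ)
        omega
      have h1 : τ⁻¹ (⟨a + k - 1 - ((⟨a + k - 1 - (i : ℕ), by omega⟩ : Fin k) : ℕ),
            by omega⟩ : Fin (a + k))
          = τ'⁻¹ (⟨a + k - 1 - ((⟨a + k - 1 - (i : ℕ), by omega⟩ : Fin k) : ℕ),
            by omega⟩ : Fin (a + k)) := congrFun heq _
      show τ (τ'⁻¹ i) = i
      rw [← hui, ← h1, Equiv.Perm.coe_inv, Equiv.apply_symm_apply]
    obtain ⟨h, hh⟩ := exists_permExt_of_fix (τ * τ'⁻¹) hg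
    obtain ⟨τ₀, hτ₀, huniq⟩ := hT τ
    have e1 : τ = τ₀ := huniq τ
      ⟨hτ, 1, by rw [permExt, Equiv.Perm.extendDomain_one, one_mul]⟩
    have e2 : τ' = τ₀ := huniq τ' ⟨hτ', h, by rw [← hh, inv_mul_cancel_right]⟩
    exact e1.trans e2.symm
  have hsurj : Set.SurjOn (fun τ : Equiv.Perm (Fin (a + k)) => fun j : Fin k =>
      τ⁻¹ ⟨a + k - 1 - (j : ℕ), by have := j.isLt; omega⟩) ↑T
      {v : Fin k → Fin (a + k) | Function.Injective v} := by
    intro v hv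
    obtain ⟨σ₀, hσ₀⟩ := exists_perm_map
      (fun j : Fin k => (⟨a + k - 1 - (j : ℕ), by have := j.isLt; omega⟩ : Fin (a + k)))
      v hu_inj hv
    obtain ⟨τ₀, ⟨hτ₀T, h, hσ⟩, -⟩ := hT σ₀⁻¹
    refine ⟨τ₀, hτ₀T, ?_⟩
    have h3 : τ₀ = (permExt (Nat.le_add_right a k) h)⁻¹ * σ₀⁻¹ := by
      rw [hσ, inv_mul_cancel_left]
    have h2 : τ₀⁻¹ = σ₀ * permExt (Nat.le_add_right a k) h := by
      rw [h3, _root_.mul_inv_rev, inv_inv, inv_inv]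
    funext j
    have hj := j.isLt
    show τ₀⁻¹ (⟨a + k - 1 - (j : ℕ), by omega⟩ : Fin (a + k)) = v j
    rw [h2, Equiv.Perm.mul_apply,
      permExt_apply_ge _ h _ (show a ≤ a + k - 1 - (j : ℕ) by omega)]
    exact hσ₀ j
  have hpart2 : sigmaOp d a k
      (fun j : Fin k => ⟨a + k - 1 - (j : ℕ), by have := j.isLt; omega⟩)
      = ((1 : ℂ) / (d : ℂ) ^ (a + k)) • Vk d a k := by
    have h0 := conj_Vk d a k hd hk 1
    rw [inv_one] at h0
    simp only [permExt, Equiv.Perm.extendDomain_one, Vperm_one, one_mul, mul_one,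
      Equiv.Perm.coe_one, id_eq] at h0
    exact h0.symm
  refine ⟨⟨fun τ _ => hF_inj τ, hinjOn, hsurj⟩, hpart2, ?_⟩
  rw [Finset.smul_sum, Finset.sum_congr rfl (fun τ _ => conj_Vk d a k hd hk τ), rhoOp]
  refine (Finset.sum_bij
    (fun (τ : Equiv.Perm (Fin (a + k))) (hτ : τ ∈ T) =>
      (⟨fun j : Fin k => τ⁻¹ ⟨a + k - 1 - (j : ℕ), by have := j.isLt; omega⟩,
        hF_inj τ⟩ : {v : Fin k → Fin (a + k) // Function.Injective v}))
    (fun τ _ => Finset.mem_univ _)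
    (fun τ hτ τ' hτ' hee => hinjOn hτ hτ' (congrArg Subtype.val hee))
    (fun b _ => ?_)
    (fun τ _ => rfl)).symm
  obtain ⟨τ, hτ, hFτ⟩ := hsurj b.2
  exact ⟨τ, hτ, Subtype.ext hFτ⟩
end

section
/- Let φ^μ be an irreducible unitary matrix representation of S(n) with nonzero Schur–Weyl multiplicity m_μ on (ℂ^d)^{⊗n}, given in a basis adapted to S(n−1) (i.e. in PRIR form relative to S(n) ⊃ S(n−1)), so that for every κ ∈ S(n−1) the matrix φ^μ(κ) is block diagonal with diagonal blocks the fixed matrix irreps φ^β of S(n−1) for the irreps β occurring in the (multiplicity-free) restriction of μ. Set φ̃^μ(a,n) := d^{δ_{a,n}}·φ^μ((a,n)) for a = 1,…,n, where (a,n) is the transposition of a and n and (n,n) is the identity (so φ̃^μ(n,n) = d·1). Then for every irrep β of S(n−1) occurring in the restriction of μ, the diagonal β-block of Σ_{a=1}^{n} φ̃^μ(a,n) equals x^μ_β·1 with x^μ_β = n·(m_μ·d_β)/(m_β·d_μ). -/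
open scoped BigOperators
open scoped Classical
open scoped ComplexOrder
open Matrix

section Aux

open Equiv Matrix

variable (d : ℕ)

lemma trV_apply (n : ℕ) (τ : Equiv.Perm (Fin n)) :
    Matrix.trace (Vperm d n τ) = ∑ f : Fin n → Fin d, if f ∘ τ = f then (1:ℂ) else 0 := by
  simp [Matrix.trace, Vperm, Matrix.diag]

lemma trV_inv (n : ℕ) (τ : Equiv.Perm (Fin n)) :
    Matrix.trace (Vperm d n τ⁻¹) = Matrix.trace (Vperm d n τ) := by
  rw [trV_apply, trV_apply]
  apply Finset.sum_congr rfl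
  intro f _
  congr 1
  simp only [eq_iff_iff]
  constructor
  · intro h
    funext x
    have := congrFun h (τ x)
    simpa using this.symm
  · intro h
    funext x
    have := congrFun h (τ⁻¹ x)
    simpa using this.symm

lemma trV_star (n : ℕ) (τ : Equiv.Perm (Fin n)) :
    (starRingEnd ℂ) (Matrix.trace (Vperm d n τ)) = Matrix.trace (Vperm d n τ) := by
  rw [trV_apply, map_sum]
  apply Finset.sum_congr rfl
  intro f _
  split <;> simp

end Aux
section Central

open Equiv Matrix

lemma trV_conj (d n : ℕ) (σ τ : Equiv.Perm (Fin n)) :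
    Matrix.trace (Vperm d n (σ * τ * σ⁻¹)) = Matrix.trace (Vperm d n τ) := by
  rw [trV_apply, trV_apply]
  refine Fintype.sum_equiv ⟨fun f => f ∘ ⇑σ, fun f => f ∘ ⇑σ⁻¹, ?_, ?_⟩ _ _ ?_
  · intro f; funext x; simp
  · intro f; funext x; simp
  intro f
  congr 1
  simp only [eq_iff_iff, Equiv.coe_fn_mk]
  constructor
  · intro h
    funext x
    have := congrFun h (σ x)
    simpa using this
  · intro h
    funext x
    have := congrFun h (σ⁻¹ x)
    simpa using this

lemma unitary_ct {m e : ℕ} (φ : Equiv.Perm (Fin m) →* Matrix (Fin e) (Fin e) ℂ)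
    (hφ : IsUnitaryIrrep φ) (g : Equiv.Perm (Fin m)) : (φ g)ᴴ = φ g⁻¹ := by
  have h1 : (φ g)ᴴ * φ g = 1 := hφ.1 g
  have h2 : φ g * φ g⁻¹ = 1 := by rw [← _root_.map_mul φ]; simp
  calc (φ g)ᴴ = (φ g)ᴴ * (φ g * φ g⁻¹) := by rw [h2, mul_one]
  _ = ((φ g)ᴴ * φ g) * φ g⁻¹ := by rw [mul_assoc]
  _ = φ g⁻¹ := by rw [h1, one_mul]

/-- The central element `Σ_τ tr(V_τ) φ(τ⁻¹)` of a unitary irrep is the scalar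
`m! ⬝ multSW / e`. -/
lemma central_sum (d m e : ℕ) (he : 0 < e)
    (φ : Equiv.Perm (Fin m) →* Matrix (Fin e) (Fin e) ℂ) (hφ : IsUnitaryIrrep φ) :
    ∑ τ : Equiv.Perm (Fin m), Matrix.trace (Vperm d m τ) • φ τ⁻¹
      = ((((m.factorial : ℝ) * multSW d m φ / e : ℝ)) : ℂ) •
          (1 : Matrix (Fin e) (Fin e) ℂ) := by
  set T : Matrix (Fin e) (Fin e) ℂ :=
    ∑ τ : Equiv.Perm (Fin m), Matrix.trace (Vperm d m τ) • φ τ⁻¹ with hT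
  -- T commutes with the representation
  have hcomm : ∀ σ : Equiv.Perm (Fin m), T * φ σ = φ σ * T := by
    intro σ
    rw [hT, Finset.sum_mul, Finset.mul_sum]
    refine Fintype.sum_equiv ((Equiv.mulLeft σ⁻¹).trans (Equiv.mulRight σ)) _ _ ?_
    intro τ
    simp only [Equiv.trans_apply, Equiv.coe_mulLeft, Equiv.coe_mulRight]
    have h1 : Matrix.trace (Vperm d m (σ⁻¹ * τ * σ)) = Matrix.trace (Vperm d m τ) := by
      have := trV_conj d m σ⁻¹ τ; rwa [inv_inv] at this
    rw [h1, smul_mul_assoc, mul_smul_comm]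
    congr 1
    rw [← _root_.map_mul φ, ← _root_.map_mul φ]
    congr 1
    group
  obtain ⟨t, ht⟩ := hφ.2 T hcomm
  -- t is real
  have hTH : Tᴴ = T := by
    rw [hT, Matrix.conjTranspose_sum]
    simp only [Matrix.conjTranspose_smul, unitary_ct φ hφ, inv_inv]
    refine Fintype.sum_equiv (Equiv.inv (Equiv.Perm (Fin m))) _ _ ?_
    intro x
    simp only [Equiv.inv_apply]
    have h1 : star (Matrix.trace (Vperm d m x)) = Matrix.trace (Vperm d m x⁻¹) := by
      rw [trV_inv]; exact trV_star d m x
    rw [h1, inv_inv]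
  have htreal : (starRingEnd ℂ) t = t := by
    have := congrFun (congrFun (congrArg Matrix.conjTranspose ht) ⟨0, he⟩) ⟨0, he⟩
    rw [hTH, ht] at this
    simpa [Matrix.conjTranspose_apply, Matrix.one_apply] using this.symm
  have ht' : t = (t.re : ℂ) := (Complex.conj_eq_iff_re.mp htreal).symm
  -- trace of T
  have htrT : Matrix.trace T = t * e := by
    rw [ht]
    simp [Matrix.trace_smul, Matrix.trace_one, mul_comm]
  -- trace of Pop
  have htrP : Matrix.trace (Pop d m φ) = ((e : ℂ) / (m.factorial : ℂ)) * Matrix.trace T := by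
    rw [hT, Pop, Matrix.trace_sum]
    have h0 : ∀ i : Fin e, Matrix.trace (Eop d m φ i i)
        = ∑ τ : Equiv.Perm (Fin m),
            ((e : ℂ)/(m.factorial : ℂ)) * (φ τ⁻¹ i i * Matrix.trace (Vperm d m τ)) := by
      intro i
      rw [Eop, Matrix.trace_smul, Matrix.trace_sum, smul_eq_mul, Finset.mul_sum]
      apply Finset.sum_congr rfl
      intro τ _
      rw [Matrix.trace_smul, smul_eq_mul]
    simp only [h0]
    rw [Finset.sum_comm, Matrix.trace_sum, Finset.mul_sum]
    apply Finset.sum_congr rfl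
    intro τ _
    rw [Matrix.trace_smul, smul_eq_mul]
    generalize Matrix.trace (Vperm d m τ) = z
    rw [Matrix.trace, Finset.mul_sum, Finset.mul_sum]
    apply Finset.sum_congr rfl
    intro i _
    simp only [Matrix.diag_apply]
    ring
  have hfac : (m.factorial : ℝ) ≠ 0 := Nat.cast_ne_zero.mpr (Nat.factorial_ne_zero m)
  have he' : (e : ℝ) ≠ 0 := by positivity
  have hms : multSW d m φ = t.re * e / m.factorial := by
    unfold multSW
    have hP : Matrix.trace (Pop d m φ) = (((e : ℝ) * e * t.re / m.factorial : ℝ) : ℂ) := by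
      rw [htrP, htrT]
      conv_lhs => rw [ht']
      push_cast
      ring
    rw [hP, Complex.ofReal_re]
    field_simp
  rw [ht, hms]
  congr 1
  have h9 : (m.factorial : ℝ) * (t.re * (e : ℝ) / m.factorial) / e = t.re := by field_simp
  rw [h9]
  exact ht' 

end Central
section Count

open Equiv Matrix

variable {b : ℕ}

/-- The last element of `Fin (b+1)`. -/
def lastF (b : ℕ) : Fin (b + 1) := ⟨b, Nat.lt_succ_self b⟩

/-- The inclusion `Fin b → Fin (b+1)`. -/
def cst (j : Fin b) : Fin (b + 1) := Fin.castLE (Nat.le_add_right b 1) j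

lemma cst_val (j : Fin b) : ((cst j : Fin (b + 1)) : ℕ) = (j : ℕ) := rfl

lemma cst_inj {j j' : Fin b} (h : cst j = cst j') : j = j' :=
  Fin.ext (by have := congrArg Fin.val h; simpa [cst_val] using this)

lemma cst_ne_last (j : Fin b) : cst j ≠ lastF b := by
  intro h
  have := congrArg Fin.val h
  simp only [cst_val, lastF] at this
  exact absurd this (Nat.ne_of_lt j.isLt)

lemma eq_cst_or_last (i : Fin (b + 1)) : (∃ j : Fin b, i = cst j) ∨ i = lastF b := by
  by_cases h : (i : ℕ) < b
  · exact Or.inl ⟨⟨(i : ℕ), h⟩, Fin.ext rfl⟩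
  · exact Or.inr (Fin.ext (by simp only [lastF]; omega))

lemma permExt_cst (κ : Equiv.Perm (Fin b)) (j : Fin b) :
    permExt (Nat.le_add_right b 1) κ (cst j) = cst (κ j) :=
  Equiv.Perm.extendDomain_apply_image κ (finLtEquiv (Nat.le_add_right b 1)) j

lemma permExt_lastF (κ : Equiv.Perm (Fin b)) :
    permExt (Nat.le_add_right b 1) κ (lastF b) = lastF b :=
  Equiv.Perm.extendDomain_apply_not_subtype κ (finLtEquiv (Nat.le_add_right b 1))
    (by simp [lastF])

/-- Splicing a function on `Fin b` with a final value. -/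
def mkf {d : ℕ} (g : Fin b → Fin d) (v : Fin d) : Fin (b + 1) → Fin d :=
  fun i => if h : (i : ℕ) < b then g ⟨(i : ℕ), h⟩ else v

lemma mkf_cst {d : ℕ} (g : Fin b → Fin d) (v : Fin d) (j : Fin b) :
    mkf g v (cst j) = g j := by
  unfold mkf
  rw [dif_pos (show ((cst j : Fin (b+1)) : ℕ) < b from j.isLt)]
  congr 1

lemma mkf_lastF {d : ℕ} (g : Fin b → Fin d) (v : Fin d) :
    mkf g v (lastF b) = v := by
  unfold mkf
  rw [dif_neg (by simp [lastF])]

/-- Splitting a function on `Fin (b+1)` into its first `b` values and its last value. -/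
def ESplit (d b : ℕ) : ((Fin b → Fin d) × Fin d) ≃ (Fin (b + 1) → Fin d) where
  toFun p := mkf p.1 p.2
  invFun f := (fun j => f (cst j), f (lastF b))
  left_inv p := by
    obtain ⟨g, v⟩ := p
    refine Prod.ext ?_ ?_
    · funext j; exact mkf_cst g v j
    · exact mkf_lastF g v
  right_inv f := by
    funext i
    rcases eq_cst_or_last i with ⟨j, rfl⟩ | rfl
    · exact mkf_cst _ _ j
    · exact mkf_lastF _ _

lemma cond_permExt {d : ℕ} (κ : Equiv.Perm (Fin b)) (g : Fin b → Fin d) (v : Fin d) :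
    (mkf g v) ∘ ⇑(permExt (Nat.le_add_right b 1) κ) = mkf g v ↔ g ∘ ⇑κ = g := by
  constructor
  · intro h
    funext j
    have hj := congrFun h (cst j)
    rw [Function.comp_apply, permExt_cst, mkf_cst, mkf_cst] at hj
    exact hj
  · intro h
    funext i
    rcases eq_cst_or_last i with ⟨j, rfl⟩ | rfl
    · rw [Function.comp_apply, permExt_cst, mkf_cst, mkf_cst]
      exact congrFun h j
    · rw [Function.comp_apply, permExt_lastF]

lemma cond_swap {d : ℕ} (a : Fin b) (κ : Equiv.Perm (Fin b)) (g : Fin b → Fin d) (v : Fin d) :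
    (mkf g v) ∘ ⇑(Equiv.swap (cst a) (lastF b) * permExt (Nat.le_add_right b 1) κ) = mkf g v
      ↔ (g ∘ ⇑κ = g ∧ v = g a) := by
  constructor
  · intro h
    have h' : ∀ i, mkf g v ((Equiv.swap (cst a) (lastF b))
        ((permExt (Nat.le_add_right b 1) κ) i)) = mkf g v i := by
      intro i
      have := congrFun h i
      rwa [Function.comp_apply, Equiv.Perm.mul_apply] at this
    have hv : v = g a := by
      have hL := h' (lastF b)
      rw [permExt_lastF, Equiv.swap_apply_right, mkf_cst, mkf_lastF] at hL
      exact hL.symm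
    refine ⟨funext fun j => ?_, hv⟩
    have hj := h' (cst j)
    rw [permExt_cst] at hj
    by_cases hja : κ j = a
    · rw [hja, Equiv.swap_apply_left, mkf_lastF, mkf_cst] at hj
      show g (κ j) = g j
      rw [hja, ← hv, hj]
    · rw [Equiv.swap_apply_of_ne_of_ne (fun hc => hja (cst_inj hc)) (cst_ne_last _),
        mkf_cst, mkf_cst] at hj
      exact hj
  · rintro ⟨hg, hv⟩
    funext i
    rw [Function.comp_apply, Equiv.Perm.mul_apply]
    rcases eq_cst_or_last i with ⟨j, rfl⟩ | rfl
    · rw [permExt_cst]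
      by_cases hja : κ j = a
      · rw [hja, Equiv.swap_apply_left, mkf_lastF, mkf_cst, hv]
        have := congrFun hg j
        rw [Function.comp_apply, hja] at this
        exact this
      · rw [Equiv.swap_apply_of_ne_of_ne (fun hc => hja (cst_inj hc)) (cst_ne_last _),
          mkf_cst, mkf_cst]
        exact congrFun hg j
    · rw [permExt_lastF, Equiv.swap_apply_right, mkf_cst, mkf_lastF, hv]

end Count
section CountTr

open Equiv Matrix

variable {b : ℕ}

lemma trV_permExt (d : ℕ) (κ : Equiv.Perm (Fin b)) :
    Matrix.trace (Vperm d (b + 1) (permExt (Nat.le_add_right b 1) κ))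
      = (d : ℂ) * Matrix.trace (Vperm d b κ) := by
  rw [trV_apply, trV_apply]
  rw [← Equiv.sum_comp (ESplit d b)
    (fun f => if f ∘ ⇑(permExt (Nat.le_add_right b 1) κ) = f then (1 : ℂ) else 0)]
  rw [Fintype.sum_prod_type]
  have h1 : ∀ (g : Fin b → Fin d) (v : Fin d),
      (if (ESplit d b (g, v)) ∘ ⇑(permExt (Nat.le_add_right b 1) κ) = ESplit d b (g, v)
        then (1 : ℂ) else 0) = if g ∘ ⇑κ = g then (1 : ℂ) else 0 := by
    intro g v
    have hE : (ESplit d b) (g, v) = mkf g v := rfl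
    rw [hE]
    by_cases h : g ∘ ⇑κ = g
    · rw [if_pos h, if_pos ((cond_permExt κ g v).mpr h)]
    · rw [if_neg h, if_neg (fun hc => h ((cond_permExt κ g v).mp hc))]
  simp only [h1]
  simp only [Finset.sum_const, Finset.card_univ, Fintype.card_fin, nsmul_eq_mul]
  rw [← Finset.mul_sum]

lemma trV_swap_mul (d : ℕ) (a : Fin (b + 1)) (κ : Equiv.Perm (Fin b)) :
    Matrix.trace (Vperm d (b + 1)
        (Equiv.swap a (lastF b) * permExt (Nat.le_add_right b 1) κ))
      = (if (a : ℕ) = b then (d : ℂ) else 1) * Matrix.trace (Vperm d b κ) := by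
  by_cases hab : (a : ℕ) = b
  · have ha : a = lastF b := Fin.ext (by simp [lastF, hab])
    rw [if_pos hab, ha, Equiv.swap_self, ← Equiv.Perm.one_def, one_mul]
    exact trV_permExt d κ
  · have ha : a = cst ⟨(a : ℕ), by have := a.isLt; omega⟩ := Fin.ext rfl
    rw [if_neg hab, one_mul, ha]
    rw [trV_apply, trV_apply]
    rw [← Equiv.sum_comp (ESplit d b)
      (fun f => if f ∘ ⇑(Equiv.swap (cst ⟨(a : ℕ), by have := a.isLt; omega⟩) (lastF b) *
        permExt (Nat.le_add_right b 1) κ) = f then (1 : ℂ) else 0)]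
    rw [Fintype.sum_prod_type]
    have h1 : ∀ (g : Fin b → Fin d) (v : Fin d),
        (if (ESplit d b (g, v)) ∘ ⇑(Equiv.swap (cst ⟨(a : ℕ), by have := a.isLt; omega⟩)
            (lastF b) * permExt (Nat.le_add_right b 1) κ) = ESplit d b (g, v)
          then (1 : ℂ) else 0)
          = if (g ∘ ⇑κ = g ∧ v = g ⟨(a : ℕ), by have := a.isLt; omega⟩) then (1 : ℂ) else 0 := by
      intro g v
      have hE : (ESplit d b) (g, v) = mkf g v := rfl
      rw [hE]
      by_cases h : g ∘ ⇑κ = g ∧ v = g ⟨(a : ℕ), by have := a.isLt; omega⟩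
      · rw [if_pos h, if_pos ((cond_swap _ κ g v).mpr h)]
      · rw [if_neg h, if_neg (fun hc => h ((cond_swap _ κ g v).mp hc))]
    simp only [h1]
    have h2 : ∀ g : Fin b → Fin d,
        (∑ v : Fin d, if (g ∘ ⇑κ = g ∧ v = g ⟨(a : ℕ), by have := a.isLt; omega⟩)
          then (1 : ℂ) else 0) = if g ∘ ⇑κ = g then (1 : ℂ) else 0 := by
      intro g
      by_cases hA : g ∘ ⇑κ = g
      · simp [hA]
      · simp [hA]
    simp only [h2]

lemma permExt_val_b_iff (κ : Equiv.Perm (Fin b)) (a : Fin (b + 1)) :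
    ((permExt (Nat.le_add_right b 1) κ a : Fin (b + 1)) : ℕ) = b ↔ (a : ℕ) = b := by
  rcases eq_cst_or_last a with ⟨j, rfl⟩ | rfl
  · rw [permExt_cst]
    simp only [cst_val]
    constructor
    · intro h; exact absurd h (Nat.ne_of_lt (κ j).isLt)
    · intro h; exact absurd h (Nat.ne_of_lt j.isLt)
  · rw [permExt_lastF]

lemma decomp_bij (b : ℕ) : Function.Bijective
    (fun p : Equiv.Perm (Fin b) × Fin (b + 1) =>
      Equiv.swap p.2 (lastF b) * permExt (Nat.le_add_right b 1) p.1) := by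
  rw [Fintype.bijective_iff_injective_and_card]
  constructor
  · rintro ⟨κ, a⟩ ⟨κ', a'⟩ hEq
    simp only at hEq
    have hL := congrArg (fun σ : Equiv.Perm (Fin (b + 1)) => σ (lastF b)) hEq
    simp only [Equiv.Perm.mul_apply, permExt_lastF, Equiv.swap_apply_right] at hL
    obtain rfl : a = a' := hL
    have h2 : permExt (Nat.le_add_right b 1) κ = permExt (Nat.le_add_right b 1) κ' :=
      mul_left_cancel hEq
    have h3 : κ = κ' := by
      apply Equiv.ext
      intro j
      have := congrArg (fun σ : Equiv.Perm (Fin (b + 1)) => σ (cst j)) h2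
      simp only [permExt_cst] at this
      exact cst_inj this
    rw [h3]
  · simp [Fintype.card_perm, Fintype.card_fin, Fintype.card_prod, Nat.factorial_succ]
    ring

end CountTr
section Block

open Equiv Matrix

variable {d b e : ℕ} {Φ : IrrepFamily b} (P : PRIRData b 1 Φ e)

lemma block_mul_left (κ : Equiv.Perm (Fin b)) (N : Matrix (Fin e) (Fin e) ℂ)
    (r : P.Path) (l₁ : Fin (Φ.dim (P.endOf r))) (j : Fin e) :
    (P.rep (permExt (Nat.le_add_right b 1) κ) * N) (P.basis ⟨r, l₁⟩) j
      = ∑ l'' : Fin (Φ.dim (P.endOf r)),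
          Φ.rep (P.endOf r) κ l₁ l'' * N (P.basis ⟨r, l''⟩) j := by
  rw [Matrix.mul_apply]
  rw [← Equiv.sum_comp P.basis
    (fun k => P.rep (permExt (Nat.le_add_right b 1) κ) (P.basis ⟨r, l₁⟩) k * N k j)]
  rw [← Finset.univ_sigma_univ, Finset.sum_sigma]
  rw [Fintype.sum_eq_single r]
  · apply Finset.sum_congr rfl
    intro l'' _
    rw [P.block_diag κ r l₁ l'']
  · intro r'' hne
    apply Finset.sum_eq_zero
    intro l'' _
    rw [P.block_off κ r r'' (Ne.symm hne) l₁ l'', zero_mul]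

lemma block_mul_right (κ : Equiv.Perm (Fin b)) (N : Matrix (Fin e) (Fin e) ℂ)
    (r : P.Path) (l₂ : Fin (Φ.dim (P.endOf r))) (i : Fin e) :
    (N * P.rep (permExt (Nat.le_add_right b 1) κ)) i (P.basis ⟨r, l₂⟩)
      = ∑ l'' : Fin (Φ.dim (P.endOf r)),
          N i (P.basis ⟨r, l''⟩) * Φ.rep (P.endOf r) κ l'' l₂ := by
  rw [Matrix.mul_apply]
  rw [← Equiv.sum_comp P.basis
    (fun k => N i k * P.rep (permExt (Nat.le_add_right b 1) κ) k (P.basis ⟨r, l₂⟩))]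
  rw [← Finset.univ_sigma_univ, Finset.sum_sigma]
  rw [Fintype.sum_eq_single r]
  · apply Finset.sum_congr rfl
    intro l'' _
    rw [P.block_diag κ r l'' l₂]
  · intro r'' hne
    apply Finset.sum_eq_zero
    intro l'' _
    rw [P.block_off κ r'' r hne l'' l₂, mul_zero]

end Block

section PermInv

open Equiv

lemma permExt_inv_s4 {b : ℕ} (κ : Equiv.Perm (Fin b)) :
    (permExt (Nat.le_add_right b 1) κ)⁻¹ = permExt (Nat.le_add_right b 1) κ⁻¹ := rfl

end PermInv


/-- For an irrep `φ^μ` of `S(n)` (here `n = b + 1`) with nonzero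
Schur–Weyl multiplicity, in PRIR form relative to `S(n) ⊃ S(n-1)` with
multiplicity-free restriction, the diagonal `β`-block of
`Σ_{a=1}^{n} d^{δ_{a,n}}·φ^μ((a,n))` equals `x^μ_β·1` with
`x^μ_β = n·(m_μ·d_β)/(m_β·d_μ)`. -/
theorem statement_4 (d b : ℕ) (hd : 2 ≤ d) (hb : 1 ≤ b)
    (Φ : IrrepFamily b) (e : ℕ) (P : PRIRData b 1 Φ e)
    (hfree : Function.Injective P.endOf)
    (hm : multSW d (b + 1) P.rep ≠ 0)
    (r : P.Path) (l l' : Fin (Φ.dim (P.endOf r))) :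
    (∑ x : Fin (b + 1),
        (if (x : ℕ) = b then (d : ℂ) else 1) *
          P.rep (Equiv.swap x ⟨b, by omega⟩) (P.basis ⟨r, l⟩) (P.basis ⟨r, l'⟩))
      = ((((b : ℝ) + 1) * multSW d (b + 1) P.rep * (Φ.dim (P.endOf r) : ℝ) /
            (multSW d b (Φ.rep (P.endOf r)) * (e : ℝ)) : ℝ) : ℂ) *
          (if l = l' then 1 else 0) := by
  classical
  show (∑ x : Fin (b + 1),
        (if (x : ℕ) = b then (d : ℂ) else 1) *
          P.rep (Equiv.swap x (lastF b)) (P.basis ⟨r, l⟩) (P.basis ⟨r, l'⟩))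
      = ((((b : ℝ) + 1) * multSW d (b + 1) P.rep * (Φ.dim (P.endOf r) : ℝ) /
            (multSW d b (Φ.rep (P.endOf r)) * (e : ℝ)) : ℝ) : ℂ) *
          (if l = l' then 1 else 0)
  set Xop : Matrix (Fin e) (Fin e) ℂ :=
    ∑ a : Fin (b + 1), (if (a : ℕ) = b then (d : ℂ) else 1) • P.rep (Equiv.swap a (lastF b))
    with hX
  set M : Matrix (Fin (Φ.dim (P.endOf r))) (Fin (Φ.dim (P.endOf r))) ℂ :=
    Matrix.of (fun l₁ l₂ => Xop (P.basis ⟨r, l₁⟩) (P.basis ⟨r, l₂⟩)) with hM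
  -- Step 1: Xop commutes with the restricted representation
  have hXcomm : ∀ κ : Equiv.Perm (Fin b),
      P.rep (permExt (Nat.le_add_right b 1) κ) * Xop
        = Xop * P.rep (permExt (Nat.le_add_right b 1) κ) := by
    intro κ
    rw [hX, Finset.mul_sum, Finset.sum_mul]
    have lhs : ∀ a : Fin (b + 1),
        P.rep (permExt (Nat.le_add_right b 1) κ) *
            ((if (a : ℕ) = b then (d : ℂ) else 1) • P.rep (Equiv.swap a (lastF b)))
          = (if (a : ℕ) = b then (d : ℂ) else 1) •
              P.rep (Equiv.swap ((permExt (Nat.le_add_right b 1) κ) a) (lastF b) *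
                permExt (Nat.le_add_right b 1) κ) := by
      intro a
      rw [Matrix.mul_smul, ← _root_.map_mul P.rep]
      congr 2
      rw [Equiv.mul_swap_eq_swap_mul, permExt_lastF]
    have rhs : ∀ a : Fin (b + 1),
        ((if (a : ℕ) = b then (d : ℂ) else 1) • P.rep (Equiv.swap a (lastF b))) *
            P.rep (permExt (Nat.le_add_right b 1) κ)
          = (if (a : ℕ) = b then (d : ℂ) else 1) •
              P.rep (Equiv.swap a (lastF b) * permExt (Nat.le_add_right b 1) κ) := by
      intro a
      rw [Matrix.smul_mul, ← _root_.map_mul P.rep]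
    simp only [lhs, rhs]
    refine Fintype.sum_equiv
      (permExt (Nat.le_add_right b 1) κ : Equiv.Perm (Fin (b + 1))) _ _ ?_
    intro a
    rw [if_congr (permExt_val_b_iff κ a) rfl rfl]
  -- Step 2: Schur's lemma for the block M
  have hMcomm : ∀ κ : Equiv.Perm (Fin b),
      M * Φ.rep (P.endOf r) κ = Φ.rep (P.endOf r) κ * M := by
    intro κ
    ext l₁ l₂
    rw [Matrix.mul_apply, Matrix.mul_apply]
    calc (∑ k, M l₁ k * Φ.rep (P.endOf r) κ k l₂)
        = (Xop * P.rep (permExt (Nat.le_add_right b 1) κ))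
            (P.basis ⟨r, l₁⟩) (P.basis ⟨r, l₂⟩) :=
          (block_mul_right P κ Xop r l₂ (P.basis ⟨r, l₁⟩)).symm
      _ = (P.rep (permExt (Nat.le_add_right b 1) κ) * Xop)
            (P.basis ⟨r, l₁⟩) (P.basis ⟨r, l₂⟩) := by rw [hXcomm κ]
      _ = ∑ k, Φ.rep (P.endOf r) κ l₁ k * M k l₂ :=
          block_mul_left P κ Xop r l₁ (P.basis ⟨r, l₂⟩)
  obtain ⟨c, hc⟩ := (Φ.irrep (P.endOf r)).2 M hMcomm
  -- central sums
  have he : 0 < e := (P.basis ⟨r, l⟩).pos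
  have hdβ : 0 < Φ.dim (P.endOf r) := Φ.dim_pos (P.endOf r)
  have hμ := central_sum d (b + 1) e he P.rep P.irrep
  have hβc := central_sum d b (Φ.dim (P.endOf r)) hdβ (Φ.rep (P.endOf r)) (Φ.irrep (P.endOf r))
  -- block computation
  have hA : ∀ κ' : Equiv.Perm (Fin b),
      (P.rep (permExt (Nat.le_add_right b 1) κ') * Xop) (P.basis ⟨r, l⟩) (P.basis ⟨r, l⟩)
        = c * Φ.rep (P.endOf r) κ' l l := by
    intro κ'
    rw [block_mul_left P κ' Xop r l (P.basis ⟨r, l⟩)]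
    have hXM : ∀ l'' : Fin (Φ.dim (P.endOf r)),
        Xop (P.basis ⟨r, l''⟩) (P.basis ⟨r, l⟩) = c * (if l'' = l then 1 else 0) := by
      intro l''
      have h6 := congrFun (congrFun hc l'') l
      rw [Matrix.smul_apply, Matrix.one_apply, smul_eq_mul] at h6
      exact h6
    simp only [hXM]
    rw [Finset.sum_eq_single l]
    · rw [if_pos rfl]; ring
    · intro l₂ _ hne
      rw [if_neg hne]; ring
    · intro habs; exact absurd (Finset.mem_univ l) habs
  -- key identity
  have key : ((((b + 1).factorial : ℝ) * multSW d (b + 1) P.rep / e : ℝ) : ℂ)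
      = c * (((b.factorial : ℝ) * multSW d b (Φ.rep (P.endOf r)) /
          (Φ.dim (P.endOf r)) : ℝ) : ℂ) := by
    have h0 := congrFun (congrFun hμ (P.basis ⟨r, l⟩)) (P.basis ⟨r, l⟩)
    rw [Matrix.smul_apply, Matrix.one_apply_eq, smul_eq_mul, mul_one] at h0
    rw [← h0, Matrix.sum_apply]
    have hterm : ∀ τ : Equiv.Perm (Fin (b + 1)),
        (Matrix.trace (Vperm d (b + 1) τ) • P.rep τ⁻¹) (P.basis ⟨r, l⟩) (P.basis ⟨r, l⟩)
          = Matrix.trace (Vperm d (b + 1) τ) *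
              P.rep τ⁻¹ (P.basis ⟨r, l⟩) (P.basis ⟨r, l⟩) := by
      intro τ; rw [Matrix.smul_apply, smul_eq_mul]
    simp only [hterm]
    rw [← Fintype.sum_bijective
      (fun p : Equiv.Perm (Fin b) × Fin (b + 1) =>
        Equiv.swap p.2 (lastF b) * permExt (Nat.le_add_right b 1) p.1)
      (decomp_bij b)
      (fun p : Equiv.Perm (Fin b) × Fin (b + 1) =>
        Matrix.trace (Vperm d (b + 1)
            (Equiv.swap p.2 (lastF b) * permExt (Nat.le_add_right b 1) p.1)) *
          P.rep ((Equiv.swap p.2 (lastF b) * permExt (Nat.le_add_right b 1) p.1)⁻¹)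
            (P.basis ⟨r, l⟩) (P.basis ⟨r, l⟩))
      (fun τ : Equiv.Perm (Fin (b + 1)) =>
        Matrix.trace (Vperm d (b + 1) τ) *
          P.rep τ⁻¹ (P.basis ⟨r, l⟩) (P.basis ⟨r, l⟩))
      (fun p => rfl)]
    rw [Fintype.sum_prod_type]
    have hstep : ∀ κ : Equiv.Perm (Fin b),
        (∑ a : Fin (b + 1),
          Matrix.trace (Vperm d (b + 1)
              (Equiv.swap a (lastF b) * permExt (Nat.le_add_right b 1) κ)) *
            P.rep ((Equiv.swap a (lastF b) * permExt (Nat.le_add_right b 1) κ)⁻¹)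
              (P.basis ⟨r, l⟩) (P.basis ⟨r, l⟩))
          = Matrix.trace (Vperm d b κ) * (c * Φ.rep (P.endOf r) κ⁻¹ l l) := by
      intro κ
      have e1 : ∀ a : Fin (b + 1),
          (Equiv.swap a (lastF b) * permExt (Nat.le_add_right b 1) κ)⁻¹
            = permExt (Nat.le_add_right b 1) κ⁻¹ * Equiv.swap a (lastF b) := by
        intro a
        rw [_root_.mul_inv_rev, Equiv.swap_inv, permExt_inv_s4]
      have c1 : ∀ a : Fin (b + 1),
          Matrix.trace (Vperm d (b + 1)
              (Equiv.swap a (lastF b) * permExt (Nat.le_add_right b 1) κ)) *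
            P.rep ((Equiv.swap a (lastF b) * permExt (Nat.le_add_right b 1) κ)⁻¹)
              (P.basis ⟨r, l⟩) (P.basis ⟨r, l⟩)
          = ((if (a : ℕ) = b then (d : ℂ) else 1) * Matrix.trace (Vperm d b κ)) *
              (P.rep (permExt (Nat.le_add_right b 1) κ⁻¹) * P.rep (Equiv.swap a (lastF b)))
                (P.basis ⟨r, l⟩) (P.basis ⟨r, l⟩) := by
        intro a
        rw [trV_swap_mul, e1 a, _root_.map_mul P.rep]
      simp only [c1]
      have c2 : (∑ a : Fin (b + 1),
          ((if (a : ℕ) = b then (d : ℂ) else 1) * Matrix.trace (Vperm d b κ)) *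
            (P.rep (permExt (Nat.le_add_right b 1) κ⁻¹) * P.rep (Equiv.swap a (lastF b)))
              (P.basis ⟨r, l⟩) (P.basis ⟨r, l⟩))
          = Matrix.trace (Vperm d b κ) *
              ∑ a : Fin (b + 1), (if (a : ℕ) = b then (d : ℂ) else 1) *
                (P.rep (permExt (Nat.le_add_right b 1) κ⁻¹) * P.rep (Equiv.swap a (lastF b)))
                  (P.basis ⟨r, l⟩) (P.basis ⟨r, l⟩) := by
        rw [Finset.mul_sum]
        apply Finset.sum_congr rfl
        intro a _
        ring
      rw [c2]
      have c3 : (∑ a : Fin (b + 1), (if (a : ℕ) = b then (d : ℂ) else 1) *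
            (P.rep (permExt (Nat.le_add_right b 1) κ⁻¹) * P.rep (Equiv.swap a (lastF b)))
              (P.basis ⟨r, l⟩) (P.basis ⟨r, l⟩))
          = (P.rep (permExt (Nat.le_add_right b 1) κ⁻¹) * Xop)
              (P.basis ⟨r, l⟩) (P.basis ⟨r, l⟩) := by
        rw [hX, Finset.mul_sum, Matrix.sum_apply]
        apply Finset.sum_congr rfl
        intro a _
        rw [Matrix.mul_smul, Matrix.smul_apply, smul_eq_mul]
      rw [c3, hA κ⁻¹]
    rw [Finset.sum_congr rfl (fun κ _ => hstep κ)]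
    have h7 : (∑ κ : Equiv.Perm (Fin b),
        Matrix.trace (Vperm d b κ) • Φ.rep (P.endOf r) κ⁻¹) l l
        = (((b.factorial : ℝ) * multSW d b (Φ.rep (P.endOf r)) /
            (Φ.dim (P.endOf r)) : ℝ) : ℂ) := by
      rw [hβc, Matrix.smul_apply, Matrix.one_apply_eq, smul_eq_mul, mul_one]
    calc (∑ κ : Equiv.Perm (Fin b),
          Matrix.trace (Vperm d b κ) * (c * Φ.rep (P.endOf r) κ⁻¹ l l))
        = c * ∑ κ : Equiv.Perm (Fin b),
            Matrix.trace (Vperm d b κ) * Φ.rep (P.endOf r) κ⁻¹ l l := by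
          rw [Finset.mul_sum]
          apply Finset.sum_congr rfl
          intro κ _
          ring
      _ = c * (∑ κ : Equiv.Perm (Fin b),
            Matrix.trace (Vperm d b κ) • Φ.rep (P.endOf r) κ⁻¹) l l := by
          rw [Matrix.sum_apply]
          simp only [Matrix.smul_apply, smul_eq_mul]
      _ = c * (((b.factorial : ℝ) * multSW d b (Φ.rep (P.endOf r)) /
            (Φ.dim (P.endOf r)) : ℝ) : ℂ) := by rw [h7]
  -- nonvanishing and arithmetic
  have hfacb : ((b.factorial : ℝ)) ≠ 0 := Nat.cast_ne_zero.mpr (Nat.factorial_ne_zero b)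
  have hfacb1 : (((b + 1).factorial : ℝ)) ≠ 0 := Nat.cast_ne_zero.mpr (Nat.factorial_ne_zero _)
  have he' : (e : ℝ) ≠ 0 := by positivity
  have hdβ' : ((Φ.dim (P.endOf r)) : ℝ) ≠ 0 := by positivity
  have htμ : (((b + 1).factorial : ℝ) * multSW d (b + 1) P.rep / e) ≠ 0 :=
    div_ne_zero (mul_ne_zero hfacb1 hm) he'
  have htβ0 : (((b.factorial : ℝ) * multSW d b (Φ.rep (P.endOf r)) /
      (Φ.dim (P.endOf r)) : ℝ) : ℂ) ≠ 0 := by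
    intro h
    rw [h, mul_zero] at key
    exact htμ (by exact_mod_cast key)
  have hmβ : multSW d b (Φ.rep (P.endOf r)) ≠ 0 := by
    intro h
    apply htβ0
    rw [h]
    norm_num
  have harith : ((((b : ℝ) + 1) * multSW d (b + 1) P.rep * (Φ.dim (P.endOf r) : ℝ) /
        (multSW d b (Φ.rep (P.endOf r)) * (e : ℝ))) *
      ((b.factorial : ℝ) * multSW d b (Φ.rep (P.endOf r)) / (Φ.dim (P.endOf r))))
      = (((b + 1).factorial : ℝ) * multSW d (b + 1) P.rep / e) := by
    rw [Nat.factorial_succ]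
    field_simp
    ring
    norm_cast
  have hcval : c = ((((b : ℝ) + 1) * multSW d (b + 1) P.rep * (Φ.dim (P.endOf r) : ℝ) /
      (multSW d b (Φ.rep (P.endOf r)) * (e : ℝ)) : ℝ) : ℂ) := by
    have h8 : ((((b : ℝ) + 1) * multSW d (b + 1) P.rep * (Φ.dim (P.endOf r) : ℝ) /
        (multSW d b (Φ.rep (P.endOf r)) * (e : ℝ)) : ℝ) : ℂ) *
        (((b.factorial : ℝ) * multSW d b (Φ.rep (P.endOf r)) /
          (Φ.dim (P.endOf r)) : ℝ) : ℂ)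
        = ((((b + 1).factorial : ℝ) * multSW d (b + 1) P.rep / e : ℝ) : ℂ) := by
      rw [← Complex.ofReal_mul, harith]
    rw [key] at h8
    exact (mul_right_cancel₀ htβ0 h8).symm
  -- conclusion
  have hLHS : (∑ x : Fin (b + 1),
      (if (x : ℕ) = b then (d : ℂ) else 1) *
        P.rep (Equiv.swap x (lastF b)) (P.basis ⟨r, l⟩) (P.basis ⟨r, l'⟩))
      = M l l' := by
    rw [hM]
    show _ = Xop (P.basis ⟨r, l⟩) (P.basis ⟨r, l'⟩)
    rw [hX, Matrix.sum_apply]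
    apply Finset.sum_congr rfl
    intro a _
    rw [Matrix.smul_apply, smul_eq_mul]
  rw [hLHS]
  have h9 := congrFun (congrFun hc l) l'
  rw [Matrix.smul_apply, Matrix.one_apply, smul_eq_mul] at h9
  rw [h9, hcval]
end

section
/- Let φ^μ be an irreducible unitary matrix representation of S(n) with m_μ ≠ 0 on (ℂ^d)^{⊗n}, in PRIR form relative to S(n) ⊃ S(n−1), with basis indices written (β, i_β) where β runs over the irreps of S(n−1) occurring in the (multiplicity-free) restriction of μ. Then the partial trace over the last tensor factor satisfies tr_n E^μ_{(β,i_β),(β',j_{β'})} = δ_{ββ'}·(m_μ/m_β)·E^β_{i_β j_β}, where E^β is constructed on (ℂ^d)^{⊗(n−1)} from the fixed matrix irrep φ^β of S(n−1). -/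
open scoped BigOperators
open scoped Classical
open scoped ComplexOrder
open Matrix

section Aux
open Equiv Equiv.Perm

variable {b : ℕ}

lemma pE_castLE (h : Equiv.Perm (Fin b)) (m : Fin b) :
    permExt (Nat.le_add_right b 1) h (Fin.castLE (Nat.le_add_right b 1) m)
      = Fin.castLE (Nat.le_add_right b 1) (h m) :=
  Equiv.Perm.extendDomain_apply_image h (finLtEquiv _) m

lemma pE_last (h : Equiv.Perm (Fin b)) :
    permExt (Nat.le_add_right b 1) h (Fin.last b) = Fin.last b :=
  Equiv.Perm.extendDomain_apply_not_subtype _ _ (by simp)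

lemma pE_mul (h h' : Equiv.Perm (Fin b)) :
    permExt (Nat.le_add_right b 1) h * permExt (Nat.le_add_right b 1) h'
      = permExt (Nat.le_add_right b 1) (h * h') :=
  Equiv.Perm.extendDomain_mul _ _ _

lemma pE_inv (h : Equiv.Perm (Fin b)) :
    (permExt (Nat.le_add_right b 1) h)⁻¹ = permExt (Nat.le_add_right b 1) h⁻¹ :=
  Equiv.Perm.extendDomain_inv _ _

lemma pE_one : permExt (Nat.le_add_right b 1) 1 = (1 : Equiv.Perm (Fin (b+1))) :=
  Equiv.Perm.extendDomain_one _

lemma pE_injective : Function.Injective (permExt (Nat.le_add_right b 1) : Equiv.Perm (Fin b) → Equiv.Perm (Fin (b+1))) :=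
  Equiv.Perm.extendDomainHom_injective (finLtEquiv _)

end Aux
section Aux2
open Equiv Equiv.Perm

variable {d b : ℕ}

lemma vperm_mul (σ π : Equiv.Perm (Fin b)) :
    Vperm d b σ * Vperm d b π = Vperm d b (σ * π) := by
  ext f g
  simp only [Matrix.mul_apply, Vperm, Matrix.of_apply, ite_mul, one_mul, zero_mul,
    Finset.sum_ite_eq, Finset.mem_univ, if_true]
  have : (f ∘ ⇑σ) ∘ ⇑π = f ∘ ⇑(σ * π) := by
    rw [Equiv.Perm.coe_mul, Function.comp_assoc]
  rw [this]

lemma vperm_one : Vperm d b 1 = (1 : Mat d b) := by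
  ext f g
  simp [Vperm, Matrix.one_apply]

lemma trace_vperm_conj (g τ : Equiv.Perm (Fin b)) :
    Matrix.trace (Vperm d b (g * τ * g⁻¹)) = Matrix.trace (Vperm d b τ) := by
  rw [← vperm_mul, ← vperm_mul, Matrix.trace_mul_cycle, vperm_mul,
    inv_mul_cancel, vperm_one, Matrix.one_mul]

lemma trace_vperm_inv (τ : Equiv.Perm (Fin b)) :
    Matrix.trace (Vperm d b τ⁻¹) = Matrix.trace (Vperm d b τ) := by
  unfold Matrix.trace
  apply Finset.sum_congr rfl
  intro f _
  simp only [Matrix.diag_apply, Vperm, Matrix.of_apply]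
  congr 1
  apply propext
  constructor <;> intro hh
  · funext x
    have := congrFun hh (τ x)
    simp only [Function.comp_apply, Equiv.Perm.coe_inv, Equiv.symm_apply_apply] at this
    simpa using this.symm
  · funext x
    have := congrFun hh (τ⁻¹ x)
    simp only [Function.comp_apply, Equiv.Perm.coe_inv, Equiv.apply_symm_apply] at this
    simpa using this.symm

lemma star_trace_vperm (τ : Equiv.Perm (Fin b)) :
    star (Matrix.trace (Vperm d b τ)) = Matrix.trace (Vperm d b τ) := by
  unfold Matrix.trace
  rw [star_sum]
  apply Finset.sum_congr rfl
  intro f _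
  simp [Matrix.diag_apply, Vperm, apply_ite (star : ℂ → ℂ)]

end Aux2
section Aux3
open Equiv Equiv.Perm

variable {d b : ℕ}

lemma splice_castLE (f : Fin b → Fin d) (t : Fin 1 → Fin d) (m : Fin b) :
    splice f t (Fin.castLE (Nat.le_add_right b 1) m) = f m := by
  simp [splice]

lemma splice_last (f : Fin b → Fin d) (t : Fin 1 → Fin d) :
    splice f t (Fin.last b) = t ⟨0, Nat.one_pos⟩ := by
  have hnot : ¬ ((Fin.last b : ℕ) < b) := by simp
  simp only [splice, hnot, dif_neg, not_false_iff]
  exact congrArg t (Subsingleton.elim _ _)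

lemma castSucc_eq_castLE (m : Fin b) :
    Fin.castSucc m = Fin.castLE (Nat.le_add_right b 1) m := rfl

lemma ptrace_vperm_pE (h : Equiv.Perm (Fin b)) :
    ptraceLast b 1 (Vperm d (b+1) (permExt (Nat.le_add_right b 1) h))
      = (d : ℂ) • Vperm d b h := by
  ext f g
  simp only [ptraceLast, Matrix.of_apply, Vperm, Matrix.smul_apply]
  have key : ∀ t : Fin 1 → Fin d,
      (splice f t ∘ ⇑(permExt (Nat.le_add_right b 1) h) = splice g t) ↔ (f ∘ ⇑h = g) := by
    intro t
    constructor
    · intro H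
      funext m
      have := congrFun H (Fin.castLE (Nat.le_add_right b 1) m)
      simp only [Function.comp_apply] at this ⊢
      rwa [pE_castLE, splice_castLE, splice_castLE] at this
    · intro H
      funext i
      induction i using Fin.lastCases with
      | last =>
        simp only [Function.comp_apply]
        rw [pE_last, splice_last, splice_last]
      | cast m =>
        simp only [Function.comp_apply, castSucc_eq_castLE]
        rw [pE_castLE, splice_castLE, splice_castLE]
        exact congrFun H m
  have : ∀ t : Fin 1 → Fin d,
      (if splice f t ∘ ⇑(permExt (Nat.le_add_right b 1) h) = splice g t then (1:ℂ) else 0)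
        = (if f ∘ ⇑h = g then (1:ℂ) else 0) := fun t => if_congr (key t) rfl rfl
  rw [Finset.sum_congr rfl (fun t _ => this t), Finset.sum_const, Finset.card_univ]
  have hcard : Fintype.card (Fin 1 → Fin d) = d := by simp
  rw [hcard, nsmul_eq_mul, smul_eq_mul]

lemma ptrace_vperm_swap (s : Fin b) (h : Equiv.Perm (Fin b)) :
    ptraceLast b 1 (Vperm d (b+1)
        (Equiv.swap (Fin.castLE (Nat.le_add_right b 1) s) (Fin.last b)
          * permExt (Nat.le_add_right b 1) h))
      = Vperm d b h := by
  set sh := Fin.castLE (Nat.le_add_right b 1) s with hsh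
  set τ := Equiv.swap sh (Fin.last b) * permExt (Nat.le_add_right b 1) h with hτ
  have τlast : τ (Fin.last b) = sh := by
    rw [hτ, Equiv.Perm.mul_apply, pE_last, Equiv.swap_apply_right]
  have τcast : ∀ m : Fin b, τ (Fin.castLE (Nat.le_add_right b 1) m)
      = if h m = s then Fin.last b else Fin.castLE (Nat.le_add_right b 1) (h m) := by
    intro m
    rw [hτ, Equiv.Perm.mul_apply, pE_castLE]
    by_cases hc : h m = s
    · rw [hc, if_pos rfl, ← hsh, Equiv.swap_apply_left]
    · rw [if_neg hc]
      apply Equiv.swap_apply_of_ne_of_ne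
      · rw [hsh]
        exact fun hcon => hc (Fin.castLE_injective _ hcon)
      · exact Fin.ne_of_val_ne (Nat.ne_of_lt (h m).isLt)
  ext f g
  simp only [ptraceLast, Matrix.of_apply, Vperm]
  have key : ∀ t : Fin 1 → Fin d,
      (splice f t ∘ ⇑τ = splice g t) ↔ ((t = fun _ => f s) ∧ f ∘ ⇑h = g) := by
    intro t
    constructor
    · intro H
      have hlast : f s = t ⟨0, Nat.one_pos⟩ := by
        have := congrFun H (Fin.last b)
        simp only [Function.comp_apply] at this
        rwa [τlast, hsh, splice_castLE, splice_last] at this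
      have hmid : ∀ m : Fin b, f (h m) = g m := by
        intro m
        have := congrFun H (Fin.castLE (Nat.le_add_right b 1) m)
        simp only [Function.comp_apply] at this
        rw [τcast m, splice_castLE] at this
        by_cases hc : h m = s
        · rw [if_pos hc, splice_last] at this
          rw [hc, hlast]
          exact this
        · rwa [if_neg hc, splice_castLE] at this
      constructor
      · funext x
        have hx : x = (⟨0, Nat.one_pos⟩ : Fin 1) := Subsingleton.elim _ _
        rw [hx, ← hlast]
      · funext m; exact hmid m
    · rintro ⟨ht, hfg⟩
      funext i
      induction i using Fin.lastCases with
      | last =>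
        simp only [Function.comp_apply]
        rw [τlast, hsh, splice_castLE, splice_last, ht]
      | cast m =>
        simp only [Function.comp_apply, castSucc_eq_castLE]
        rw [τcast m, splice_castLE]
        by_cases hc : h m = s
        · rw [if_pos hc, splice_last, ht]
          have := congrFun hfg m
          simp only [Function.comp_apply] at this
          rw [← this, hc]
        · rw [if_neg hc, splice_castLE]
          exact congrFun hfg m
  have hrw : ∀ t : Fin 1 → Fin d,
      (if splice f t ∘ ⇑τ = splice g t then (1:ℂ) else 0)
        = (if ((t = fun _ => f s) ∧ f ∘ ⇑h = g) then (1:ℂ) else 0) :=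
    fun t => if_congr (key t) rfl rfl
  rw [Finset.sum_congr rfl (fun t _ => hrw t)]
  by_cases hQ : f ∘ ⇑h = g
  · simp [hQ]
  · simp [hQ]

def spliceEquiv (d b : ℕ) : ((Fin b → Fin d) × (Fin 1 → Fin d)) ≃ (Fin (b+1) → Fin d) where
  toFun p := splice p.1 p.2
  invFun u := (fun m => u (Fin.castLE (Nat.le_add_right b 1) m), fun _ => u (Fin.last b))
  left_inv p := by
    obtain ⟨f, t⟩ := p
    have h1 : (fun m => splice f t (Fin.castLE (Nat.le_add_right b 1) m)) = f :=
      funext fun m => splice_castLE f t m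
    have h2 : (fun _ : Fin 1 => splice f t (Fin.last b)) = t := by
      funext x
      rw [splice_last]
      exact congrArg t (Subsingleton.elim _ _)
    show (_, _) = (f, t)
    rw [h1, h2]
  right_inv u := by
    funext i
    induction i using Fin.lastCases with
    | last => exact splice_last _ _
    | cast m => exact splice_castLE _ _ m

lemma trace_ptraceLast (X : Mat d (b+1)) :
    Matrix.trace (ptraceLast b 1 X) = Matrix.trace X := by
  unfold Matrix.trace ptraceLast
  simp only [Matrix.diag_apply, Matrix.of_apply]
  rw [← Equiv.sum_comp (spliceEquiv d b) (fun u => X u u), Fintype.sum_prod_type]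
  rfl

lemma ptraceLast_smul (c : ℂ) (X : Mat d (b+1)) :
    ptraceLast b 1 (c • X) = c • ptraceLast b 1 X := by
  ext f g
  simp [ptraceLast, Finset.mul_sum]

lemma ptraceLast_sum {ι : Type*} [Fintype ι] (F : ι → Mat d (b+1)) :
    ptraceLast b 1 (∑ i, F i) = ∑ i, ptraceLast b 1 (F i) := by
  ext f g
  simp only [ptraceLast, Matrix.of_apply, Matrix.sum_apply]
  exact Finset.sum_comm

end Aux3
section Aux4
open Equiv Equiv.Perm

variable {b : ℕ}

lemma swapmul_last (s : Fin (b+1)) (h : Equiv.Perm (Fin b)) :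
    (Equiv.swap s (Fin.last b) * permExt (Nat.le_add_right b 1) h) (Fin.last b) = s := by
  rw [Equiv.Perm.mul_apply, pE_last, Equiv.swap_apply_right]

noncomputable def decompEquiv (b : ℕ) : (Fin (b+1) × Equiv.Perm (Fin b)) ≃ Equiv.Perm (Fin (b+1)) :=
  Equiv.ofBijective
    (fun p => Equiv.swap p.1 (Fin.last b) * permExt (Nat.le_add_right b 1) p.2)
    (by
      rw [Fintype.bijective_iff_injective_and_card]
      constructor
      · rintro ⟨s, h⟩ ⟨s', h'⟩ hEq
        simp only at hEq
        have hs : s = s' := by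
          have h1 := swapmul_last s h
          have h2 := swapmul_last s' h'
          rw [hEq] at h1
          exact h1.symm.trans h2
        subst hs
        have : permExt (Nat.le_add_right b 1) h = permExt (Nat.le_add_right b 1) h' :=
          mul_left_cancel hEq
        rw [pE_injective this]
      · simp only [Fintype.card_prod, Fintype.card_perm, Fintype.card_fin]
        rw [Nat.factorial_succ])

lemma decompEquiv_apply (s : Fin (b+1)) (h : Equiv.Perm (Fin b)) :
    decompEquiv b (s, h) = Equiv.swap s (Fin.last b) * permExt (Nat.le_add_right b 1) h := rfl

lemma pE_swap (x y : Fin b) :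
    permExt (Nat.le_add_right b 1) (Equiv.swap x y)
      = Equiv.swap (Fin.castLE (Nat.le_add_right b 1) x) (Fin.castLE (Nat.le_add_right b 1) y) := by
  apply Equiv.ext
  intro i
  induction i using Fin.lastCases with
  | last =>
    rw [pE_last]
    rw [Equiv.swap_apply_of_ne_of_ne]
    · exact Fin.ne_of_val_ne (Nat.ne_of_gt x.isLt)
    · exact Fin.ne_of_val_ne (Nat.ne_of_gt y.isLt)
  | cast m =>
    rw [castSucc_eq_castLE, pE_castLE]
    simp only [Equiv.swap_apply_def, Fin.castLE_inj]
    split_ifs <;> rfl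

lemma isSwap_pE (h : Equiv.Perm (Fin b)) :
    (permExt (Nat.le_add_right b 1) h).IsSwap ↔ h.IsSwap := by
  constructor
  · rintro ⟨x, y, hxy, hEq⟩
    have hxl : x ≠ Fin.last b := by
      intro hc
      subst hc
      have := pE_last h
      rw [hEq, Equiv.swap_apply_left] at this
      exact hxy this.symm
    have hyl : y ≠ Fin.last b := by
      intro hc
      subst hc
      have := pE_last h
      rw [hEq, Equiv.swap_apply_right] at this
      exact hxy this
    have hx : (x : ℕ) < b := Fin.val_lt_last hxl
    have hy : (y : ℕ) < b := Fin.val_lt_last hyl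
    refine ⟨⟨x, hx⟩, ⟨y, hy⟩, ?_, ?_⟩
    · intro hc
      rw [Fin.mk_eq_mk] at hc
      exact hxy (Fin.ext hc)
    · apply pE_injective
      rw [pE_swap, hEq]
      congr 1 <;> exact Fin.ext rfl
  · rintro ⟨x, y, hxy, hEq⟩
    subst hEq
    rw [pE_swap]
    exact ⟨_, _, fun hc => hxy (Fin.castLE_injective _ hc), rfl⟩

lemma isSwap_swap_mul (s : Fin b) (h : Equiv.Perm (Fin b)) :
    (Equiv.swap (Fin.castLE (Nat.le_add_right b 1) s) (Fin.last b)
      * permExt (Nat.le_add_right b 1) h).IsSwap ↔ h = 1 := by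
  set sh := Fin.castLE (Nat.le_add_right b 1) s with hsh
  have hsl : sh ≠ Fin.last b := Fin.ne_of_val_ne (Nat.ne_of_lt s.isLt)
  constructor
  · rintro ⟨x, y, hxy, hEq⟩
    have hlast : Equiv.swap x y (Fin.last b) = sh := by
      rw [← hEq]
      exact swapmul_last sh h
    have hswap : Equiv.swap x y = Equiv.swap sh (Fin.last b) := by
      by_cases hx : Fin.last b = x
      · subst hx
        rw [Equiv.swap_apply_left] at hlast
        rw [hlast, Equiv.swap_comm]
      · by_cases hy : Fin.last b = y
        · subst hy
          rw [Equiv.swap_apply_right] at hlast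
          rw [hlast]
        · rw [Equiv.swap_apply_of_ne_of_ne hx hy] at hlast
          exact absurd hlast.symm hsl
    rw [hswap] at hEq
    have h2 : permExt (Nat.le_add_right b 1) h = 1 :=
      mul_left_cancel (a := Equiv.swap sh (Fin.last b)) (by rw [mul_one]; exact hEq)
    rw [← pE_one (b := b)] at h2
    exact pE_injective h2
  · intro hc
    subst hc
    rw [pE_one, mul_one]
    exact ⟨sh, Fin.last b, hsl, rfl⟩

lemma isSwap_conj {m : ℕ} (g τ : Equiv.Perm (Fin m)) :
    (g * τ * g⁻¹).IsSwap ↔ τ.IsSwap := by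
  have fwd : ∀ (g τ : Equiv.Perm (Fin m)), τ.IsSwap → (g * τ * g⁻¹).IsSwap := by
    rintro g τ ⟨x, y, hxy, rfl⟩
    exact ⟨g x, g y, fun hc => hxy (g.injective hc), (Equiv.swap_apply_apply g x y).symm⟩
  constructor
  · intro hs
    have := fwd g⁻¹ _ hs
    simpa [mul_assoc] using this
  · exact fwd g τ

end Aux4
section Aux5
open Equiv Equiv.Perm

variable {d m e : ℕ}

noncomputable def swInd {m : ℕ} (τ : Equiv.Perm (Fin m)) : ℂ := if τ.IsSwap then 1 else 0

noncomputable def conjEquiv {m : ℕ} (g : Equiv.Perm (Fin m)) :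
    Equiv.Perm (Fin m) ≃ Equiv.Perm (Fin m) :=
  (Equiv.mulLeft g⁻¹).trans (Equiv.mulRight g)

lemma conjEquiv_apply {m : ℕ} (g τ : Equiv.Perm (Fin m)) :
    conjEquiv g τ = g⁻¹ * τ * g := rfl

lemma swInd_conj {m : ℕ} (g τ : Equiv.Perm (Fin m)) : swInd (g⁻¹ * τ * g) = swInd τ := by
  have h := isSwap_conj g⁻¹ τ
  rw [inv_inv] at h
  unfold swInd
  rw [if_congr h rfl rfl]

lemma trace_vperm_conj' (g τ : Equiv.Perm (Fin m)) :
    Matrix.trace (Vperm d m (g⁻¹ * τ * g)) = Matrix.trace (Vperm d m τ) := by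
  have h := trace_vperm_conj (d := d) g⁻¹ τ
  rwa [inv_inv] at h

lemma centralSwap_comm (φ : Equiv.Perm (Fin m) →* Matrix (Fin e) (Fin e) ℂ)
    (g : Equiv.Perm (Fin m)) :
    (∑ τ, swInd τ • φ τ) * φ g = φ g * ∑ τ, swInd τ • φ τ := by
  rw [Finset.sum_mul, Finset.mul_sum]
  apply Fintype.sum_equiv (conjEquiv g)
  intro τ
  rw [conjEquiv_apply, swInd_conj, smul_mul_assoc, mul_smul_comm,
    ← _root_.map_mul φ, ← _root_.map_mul φ]
  congr 2
  group

lemma traceW_comm (φ : Equiv.Perm (Fin m) →* Matrix (Fin e) (Fin e) ℂ)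
    (g : Equiv.Perm (Fin m)) :
    (∑ τ, Matrix.trace (Vperm d m τ) • φ τ⁻¹) * φ g
      = φ g * ∑ τ, Matrix.trace (Vperm d m τ) • φ τ⁻¹ := by
  rw [Finset.sum_mul, Finset.mul_sum]
  apply Fintype.sum_equiv (conjEquiv g)
  intro τ
  rw [conjEquiv_apply, trace_vperm_conj', smul_mul_assoc, mul_smul_comm,
    ← _root_.map_mul φ, ← _root_.map_mul φ]
  congr 2
  group

lemma conjTranspose_rep (φ : Equiv.Perm (Fin m) →* Matrix (Fin e) (Fin e) ℂ)
    (hu : ∀ g, (φ g)ᴴ * φ g = 1) (τ : Equiv.Perm (Fin m)) : (φ τ)ᴴ = φ τ⁻¹ := by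
  have h1 : φ τ⁻¹ * φ τ = 1 := by rw [← _root_.map_mul φ, inv_mul_cancel, _root_.map_one φ]
  have h2 : φ τ * (φ τ)ᴴ = 1 := mul_eq_one_comm.mp (hu τ)
  calc (φ τ)ᴴ = (φ τ⁻¹ * φ τ) * (φ τ)ᴴ := by rw [h1, Matrix.one_mul]
    _ = φ τ⁻¹ * (φ τ * (φ τ)ᴴ) := by rw [Matrix.mul_assoc]
    _ = φ τ⁻¹ := by rw [h2, Matrix.mul_one]

lemma trace_Pop_eq (φ : Equiv.Perm (Fin m) →* Matrix (Fin e) (Fin e) ℂ) :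
    Matrix.trace (Pop d m φ)
      = ((e : ℂ) / (Nat.factorial m : ℂ))
          * ∑ τ, Matrix.trace (φ τ⁻¹) * Matrix.trace (Vperm d m τ) := by
  unfold Pop
  rw [Matrix.trace_sum]
  have hi : ∀ i : Fin e, Matrix.trace (Eop d m φ i i)
      = ∑ τ, ((e : ℂ) / (Nat.factorial m : ℂ)) * (φ τ⁻¹ i i * Matrix.trace (Vperm d m τ)) := by
    intro i
    unfold Eop
    rw [Matrix.trace_smul, Matrix.trace_sum, smul_eq_mul, Finset.mul_sum]
    apply Finset.sum_congr rfl
    intro τ _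
    rw [Matrix.trace_smul, smul_eq_mul]
  rw [Finset.sum_congr rfl (fun i _ => hi i), Finset.sum_comm, Finset.mul_sum]
  apply Finset.sum_congr rfl
  intro τ _
  rw [← Finset.mul_sum, ← Finset.sum_mul]
  rfl

lemma star_trace_Pop (φ : Equiv.Perm (Fin m) →* Matrix (Fin e) (Fin e) ℂ)
    (hu : ∀ g, (φ g)ᴴ * φ g = 1) :
    star (Matrix.trace (Pop d m φ)) = Matrix.trace (Pop d m φ) := by
  rw [trace_Pop_eq, star_mul', star_sum]
  have hc : star ((e : ℂ) / (Nat.factorial m : ℂ)) = (e : ℂ) / (Nat.factorial m : ℂ) := by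
    rw [star_div₀, star_natCast, star_natCast]
  rw [hc]
  congr 1
  rw [← Equiv.sum_comp (Equiv.inv (Equiv.Perm (Fin m)))
    (fun τ => star (Matrix.trace (φ τ⁻¹) * Matrix.trace (Vperm d m τ)))]
  apply Finset.sum_congr rfl
  intro τ _
  simp only [Equiv.inv_apply, inv_inv]
  rw [star_mul', star_trace_vperm, trace_vperm_inv]
  congr 1
  rw [← Matrix.trace_conjTranspose, conjTranspose_rep φ hu]

lemma trace_Eop_diag (φ : Equiv.Perm (Fin m) →* Matrix (Fin e) (Fin e) ℂ)
    (hirr : IsUnitaryIrrep φ) (p : Fin e) :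
    (e : ℂ) * Matrix.trace (Eop d m φ p p) = Matrix.trace (Pop d m φ) := by
  set W : Matrix (Fin e) (Fin e) ℂ := ∑ τ, Matrix.trace (Vperm d m τ) • φ τ⁻¹ with hW
  obtain ⟨w, hw⟩ := hirr.2 W (fun g => traceW_comm φ g)
  have hE : ∀ p q : Fin e, Matrix.trace (Eop d m φ p q)
      = ((e : ℂ) / (Nat.factorial m : ℂ)) * W q p := by
    intro p q
    unfold Eop
    rw [Matrix.trace_smul, Matrix.trace_sum, smul_eq_mul]
    congr 1
    rw [hW, Matrix.sum_apply]
    apply Finset.sum_congr rfl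
    intro τ _
    rw [Matrix.trace_smul, Matrix.smul_apply, smul_eq_mul, smul_eq_mul]
    ring
  have hPop : Matrix.trace (Pop d m φ)
      = ((e : ℂ) / (Nat.factorial m : ℂ)) * (w * e) := by
    unfold Pop
    rw [Matrix.trace_sum]
    have : ∀ i : Fin e, Matrix.trace (Eop d m φ i i)
        = ((e : ℂ) / (Nat.factorial m : ℂ)) * (w * (1 : Matrix (Fin e) (Fin e) ℂ) i i) := by
      intro i
      rw [hE i i, hw, Matrix.smul_apply, smul_eq_mul]
    rw [Finset.sum_congr rfl (fun i _ => this i), ← Finset.mul_sum]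
    congr 1
    rw [← Finset.mul_sum]
    congr 1
    simp [Matrix.one_apply]
  rw [hPop, hE p p, hw, Matrix.smul_apply, smul_eq_mul]
  have : (1 : Matrix (Fin e) (Fin e) ℂ) p p = 1 := Matrix.one_apply_eq p
  rw [this]
  ring

end Aux5
section Aux6
open Equiv Equiv.Perm

variable {b e : ℕ}

lemma swap_last_one : Equiv.swap (Fin.last b) (Fin.last b) = (1 : Equiv.Perm (Fin (b+1))) := by
  rw [Equiv.swap_self]
  rfl

lemma swapSum_split (ψ : Equiv.Perm (Fin (b+1)) →* Matrix (Fin e) (Fin e) ℂ) :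
    ∑ τ : Equiv.Perm (Fin (b+1)), swInd τ • ψ τ
      = (∑ h : Equiv.Perm (Fin b), swInd h • ψ (permExt (Nat.le_add_right b 1) h))
        + ∑ s : Fin b,
            ψ (Equiv.swap (Fin.castLE (Nat.le_add_right b 1) s) (Fin.last b)) := by
  rw [← Equiv.sum_comp (decompEquiv b) (fun τ => swInd τ • ψ τ), Fintype.sum_prod_type,
    Fin.sum_univ_castSucc, add_comm]
  congr 1
  · -- last part
    apply Finset.sum_congr rfl
    intro h _
    rw [decompEquiv_apply, swap_last_one, one_mul]
    unfold swInd
    rw [if_congr (isSwap_pE h) rfl rfl]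
  · -- castSucc part: each inner sum collapses to a single swap
    apply Finset.sum_congr rfl
    intro s _
    have hs : ∀ h : Equiv.Perm (Fin b),
        swInd (decompEquiv b (Fin.castSucc s, h)) • ψ (decompEquiv b (Fin.castSucc s, h))
          = if h = (1 : Equiv.Perm (Fin b))
            then ψ (decompEquiv b (Fin.castSucc s, h)) else 0 := by
      intro h
      rw [decompEquiv_apply]
      unfold swInd
      rw [castSucc_eq_castLE, if_congr (isSwap_swap_mul s h) rfl rfl, ite_smul,
        one_smul, zero_smul]
    rw [Finset.sum_congr rfl (fun h _ => hs h), Finset.sum_ite_eq' Finset.univ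
      (1 : Equiv.Perm (Fin b))]
    rw [if_pos (Finset.mem_univ _), decompEquiv_apply, castSucc_eq_castLE, pE_one, mul_one]

end Aux6
section Aux7
open Equiv Equiv.Perm

lemma key_op (d b : ℕ) (Φ : IrrepFamily b) (e : ℕ) (P : PRIRData b 1 Φ e) :
    ∃ K : Φ.Label → ℂ,
      (∀ (r : P.Path) (i j : Fin (Φ.dim (P.endOf r))),
        ptraceLast b 1 (Eop d (b+1) P.rep (P.basis ⟨r, i⟩) (P.basis ⟨r, j⟩))
          = K (P.endOf r) • Eop d b (Φ.rep (P.endOf r)) i j)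
      ∧ (∀ (r r' : P.Path), r ≠ r' →
          ∀ (i : Fin (Φ.dim (P.endOf r))) (j : Fin (Φ.dim (P.endOf r'))),
        ptraceLast b 1 (Eop d (b+1) P.rep (P.basis ⟨r, i⟩) (P.basis ⟨r', j⟩)) = 0) := by
  classical
  obtain ⟨z, hz⟩ := P.irrep.2 (∑ τ : Equiv.Perm (Fin (b+1)), swInd τ • P.rep τ)
    (fun g => centralSwap_comm P.rep g)
  have hZβ : ∀ α : Φ.Label, ∃ c : ℂ,
      (∑ h : Equiv.Perm (Fin b), swInd h • Φ.rep α h)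
        = c • (1 : Matrix (Fin (Φ.dim α)) (Fin (Φ.dim α)) ℂ) :=
    fun α => (Φ.irrep α).2 _ (fun g => centralSwap_comm (Φ.rep α) g)
  choose zb hzb using hZβ
  set Zb : Matrix (Fin e) (Fin e) ℂ :=
    ∑ h : Equiv.Perm (Fin b), swInd h • P.rep (permExt (Nat.le_add_right b 1) h) with hZb
  set Xop : Matrix (Fin e) (Fin e) ℂ :=
    ∑ s : Fin b, P.rep (Equiv.swap (Fin.castLE (Nat.le_add_right b 1) s) (Fin.last b))
    with hXop
  have hsplit : (∑ τ : Equiv.Perm (Fin (b+1)), swInd τ • P.rep τ) = Zb + Xop :=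
    swapSum_split P.rep
  -- entries of Zb
  have hZbent : ∀ (r1 : P.Path) (l1 : Fin (Φ.dim (P.endOf r1)))
      (r2 : P.Path) (l2 : Fin (Φ.dim (P.endOf r2))),
      Zb (P.basis ⟨r1, l1⟩) (P.basis ⟨r2, l2⟩)
        = if (⟨r1, l1⟩ : Σ t, Fin (Φ.dim (P.endOf t))) = ⟨r2, l2⟩
          then zb (P.endOf r1) else 0 := by
    intro r1 l1 r2 l2
    rw [hZb, Matrix.sum_apply]
    by_cases hr : r1 = r2
    · subst hr
      have hstep : ∀ h : Equiv.Perm (Fin b),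
          (swInd h • P.rep (permExt (Nat.le_add_right b 1) h))
              (P.basis ⟨r1, l1⟩) (P.basis ⟨r1, l2⟩)
            = swInd h * Φ.rep (P.endOf r1) h l1 l2 := by
        intro h
        rw [Matrix.smul_apply, smul_eq_mul, P.block_diag h r1 l1 l2]
      rw [Finset.sum_congr rfl (fun h _ => hstep h)]
      have h2 : ∑ h : Equiv.Perm (Fin b), swInd h * Φ.rep (P.endOf r1) h l1 l2
          = (zb (P.endOf r1)
              • (1 : Matrix (Fin (Φ.dim (P.endOf r1))) (Fin (Φ.dim (P.endOf r1))) ℂ)) l1 l2 := by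
        rw [← hzb (P.endOf r1), Matrix.sum_apply]
        apply Finset.sum_congr rfl
        intro h _
        rw [Matrix.smul_apply, smul_eq_mul]
      rw [h2, Matrix.smul_apply, Matrix.one_apply, smul_eq_mul]
      by_cases hl : l1 = l2
      · subst hl; simp
      · rw [if_neg hl, if_neg (by simp [hl]), mul_zero]
    · have hstep : ∀ h : Equiv.Perm (Fin b),
          (swInd h • P.rep (permExt (Nat.le_add_right b 1) h))
              (P.basis ⟨r1, l1⟩) (P.basis ⟨r2, l2⟩) = 0 := by
        intro h
        rw [Matrix.smul_apply, P.block_off h r1 r2 hr l1 l2, smul_zero]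
      rw [Finset.sum_congr rfl (fun h _ => hstep h), Finset.sum_const, smul_zero,
        if_neg (by simp [hr])]
  -- entries of Xop
  have hXent : ∀ (r1 : P.Path) (l1 : Fin (Φ.dim (P.endOf r1)))
      (r2 : P.Path) (l2 : Fin (Φ.dim (P.endOf r2))),
      Xop (P.basis ⟨r1, l1⟩) (P.basis ⟨r2, l2⟩)
        = if (⟨r1, l1⟩ : Σ t, Fin (Φ.dim (P.endOf t))) = ⟨r2, l2⟩
          then z - zb (P.endOf r1) else 0 := by
    intro r1 l1 r2 l2
    have hX2 : Xop = (∑ τ : Equiv.Perm (Fin (b+1)), swInd τ • P.rep τ) - Zb := by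
      rw [hsplit]; abel
    rw [hX2, Matrix.sub_apply, hz, hZbent r1 l1 r2 l2, Matrix.smul_apply,
      Matrix.one_apply, smul_eq_mul]
    by_cases hx : (⟨r1, l1⟩ : Σ t, Fin (Φ.dim (P.endOf t))) = ⟨r2, l2⟩
    · have hb : P.basis ⟨r1, l1⟩ = P.basis ⟨r2, l2⟩ := congrArg P.basis hx
      rw [if_pos hx, if_pos hx, if_pos hb]
      ring
    · have hb : P.basis ⟨r1, l1⟩ ≠ P.basis ⟨r2, l2⟩ := fun hc => hx (P.basis.injective hc)
      rw [if_neg hx, if_neg hx, if_neg hb]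
      ring
  -- the main operator computation
  have main : ∀ (r1 r2 : P.Path) (i1 : Fin (Φ.dim (P.endOf r1)))
      (j2 : Fin (Φ.dim (P.endOf r2))),
      ptraceLast b 1 (Eop d (b+1) P.rep (P.basis ⟨r1, i1⟩) (P.basis ⟨r2, j2⟩))
        = ((e : ℂ) / (Nat.factorial (b+1) : ℂ)) •
            ∑ h : Equiv.Perm (Fin b),
              ((((d : ℂ) + z - zb (P.endOf r1))
                  * P.rep (permExt (Nat.le_add_right b 1) h⁻¹)
                      (P.basis ⟨r2, j2⟩) (P.basis ⟨r1, i1⟩)) • Vperm d b h) := by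
    intro r1 r2 i1 j2
    unfold Eop
    rw [ptraceLast_smul, ptraceLast_sum]
    congr 1
    calc
      ∑ τ : Equiv.Perm (Fin (b+1)),
          ptraceLast b 1 (P.rep τ⁻¹ (P.basis ⟨r2, j2⟩) (P.basis ⟨r1, i1⟩) • Vperm d (b+1) τ)
        = ∑ τ : Equiv.Perm (Fin (b+1)),
            P.rep τ⁻¹ (P.basis ⟨r2, j2⟩) (P.basis ⟨r1, i1⟩)
              • ptraceLast b 1 (Vperm d (b+1) τ) := by
          apply Finset.sum_congr rfl
          intro τ _
          exact ptraceLast_smul _ _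
      _ = ∑ p : Fin (b+1) × Equiv.Perm (Fin b),
            P.rep (decompEquiv b p)⁻¹ (P.basis ⟨r2, j2⟩) (P.basis ⟨r1, i1⟩)
              • ptraceLast b 1 (Vperm d (b+1) (decompEquiv b p)) :=
          (Equiv.sum_comp (decompEquiv b) _).symm
      _ = (∑ s : Fin b, ∑ h : Equiv.Perm (Fin b),
            P.rep (decompEquiv b (Fin.castSucc s, h))⁻¹
                (P.basis ⟨r2, j2⟩) (P.basis ⟨r1, i1⟩)
              • ptraceLast b 1 (Vperm d (b+1) (decompEquiv b (Fin.castSucc s, h))))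
          + ∑ h : Equiv.Perm (Fin b),
            P.rep (decompEquiv b (Fin.last b, h))⁻¹
                (P.basis ⟨r2, j2⟩) (P.basis ⟨r1, i1⟩)
              • ptraceLast b 1 (Vperm d (b+1) (decompEquiv b (Fin.last b, h))) := by
          rw [Fintype.sum_prod_type, Fin.sum_univ_castSucc]
      _ = (∑ h : Equiv.Perm (Fin b), ∑ s : Fin b,
            (P.rep (permExt (Nat.le_add_right b 1) h⁻¹)
              * P.rep (Equiv.swap (Fin.castLE (Nat.le_add_right b 1) s) (Fin.last b)))
                (P.basis ⟨r2, j2⟩) (P.basis ⟨r1, i1⟩) • Vperm d b h)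
          + ∑ h : Equiv.Perm (Fin b),
            P.rep (permExt (Nat.le_add_right b 1) h⁻¹)
                (P.basis ⟨r2, j2⟩) (P.basis ⟨r1, i1⟩) • ((d : ℂ) • Vperm d b h) := by
          congr 1
          · rw [Finset.sum_comm]
            apply Finset.sum_congr rfl
            intro h _
            apply Finset.sum_congr rfl
            intro s _
            rw [decompEquiv_apply, castSucc_eq_castLE, ptrace_vperm_swap, _root_.mul_inv_rev,
              Equiv.swap_inv, _root_.map_mul P.rep, pE_inv]
          · apply Finset.sum_congr rfl
            intro h _
            rw [decompEquiv_apply, swap_last_one, one_mul, pE_inv, ptrace_vperm_pE]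
      _ = ∑ h : Equiv.Perm (Fin b),
            ((((d : ℂ) + z - zb (P.endOf r1))
              * P.rep (permExt (Nat.le_add_right b 1) h⁻¹)
                  (P.basis ⟨r2, j2⟩) (P.basis ⟨r1, i1⟩)) • Vperm d b h) := by
          rw [← Finset.sum_add_distrib]
          apply Finset.sum_congr rfl
          intro h _
          have hcollapse : ∑ s : Fin b,
              (P.rep (permExt (Nat.le_add_right b 1) h⁻¹)
                * P.rep (Equiv.swap (Fin.castLE (Nat.le_add_right b 1) s) (Fin.last b)))
                  (P.basis ⟨r2, j2⟩) (P.basis ⟨r1, i1⟩)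
              = (z - zb (P.endOf r1))
                  * P.rep (permExt (Nat.le_add_right b 1) h⁻¹)
                      (P.basis ⟨r2, j2⟩) (P.basis ⟨r1, i1⟩) := by
            have hmx : ∑ s : Fin b,
                (P.rep (permExt (Nat.le_add_right b 1) h⁻¹)
                  * P.rep (Equiv.swap (Fin.castLE (Nat.le_add_right b 1) s) (Fin.last b)))
                    (P.basis ⟨r2, j2⟩) (P.basis ⟨r1, i1⟩)
                = (P.rep (permExt (Nat.le_add_right b 1) h⁻¹) * Xop)
                    (P.basis ⟨r2, j2⟩) (P.basis ⟨r1, i1⟩) := by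
              rw [hXop, Finset.mul_sum, Matrix.sum_apply]
            rw [hmx, Matrix.mul_apply]
            rw [← Equiv.sum_comp P.basis
              (fun u => P.rep (permExt (Nat.le_add_right b 1) h⁻¹) (P.basis ⟨r2, j2⟩) u
                * Xop u (P.basis ⟨r1, i1⟩))]
            have hterm : ∀ x : Σ t : P.Path, Fin (Φ.dim (P.endOf t)),
                P.rep (permExt (Nat.le_add_right b 1) h⁻¹) (P.basis ⟨r2, j2⟩) (P.basis x)
                  * Xop (P.basis x) (P.basis ⟨r1, i1⟩)
                  = if x = ⟨r1, i1⟩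
                    then P.rep (permExt (Nat.le_add_right b 1) h⁻¹)
                          (P.basis ⟨r2, j2⟩) (P.basis x) * (z - zb (P.endOf r1))
                    else 0 := by
              rintro ⟨t, l⟩
              rw [hXent t l r1 i1]
              by_cases hx : (⟨t, l⟩ : Σ t : P.Path, Fin (Φ.dim (P.endOf t))) = ⟨r1, i1⟩
              · have ht : t = r1 := congrArg Sigma.fst hx
                subst ht
                rw [if_pos hx, if_pos hx]
              · rw [if_neg hx, if_neg hx, mul_zero]
            rw [Finset.sum_congr rfl (fun x _ => hterm x)]
            rw [Finset.sum_ite_eq' Finset.univ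
              (⟨r1, i1⟩ : Σ t : P.Path, Fin (Φ.dim (P.endOf t)))]
            rw [if_pos (Finset.mem_univ _)]
            ring
          rw [← Finset.sum_smul, hcollapse, smul_smul, ← add_smul]
          congr 1
          ring
  -- assemble
  refine ⟨fun α => ((e : ℂ) / (Nat.factorial (b+1) : ℂ))
    * (((d : ℂ) + z - zb α) * ((Nat.factorial b : ℂ) / (Φ.dim α : ℂ))), ?_, ?_⟩
  · intro r i j
    rw [main r r i j]
    have hco : ∀ h : Equiv.Perm (Fin b),
        P.rep (permExt (Nat.le_add_right b 1) h⁻¹) (P.basis ⟨r, j⟩) (P.basis ⟨r, i⟩)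
          = Φ.rep (P.endOf r) h⁻¹ j i := fun h => P.block_diag h⁻¹ r j i
    unfold Eop
    rw [smul_smul]
    have hpull : ∑ h : Equiv.Perm (Fin b),
        ((((d : ℂ) + z - zb (P.endOf r))
          * P.rep (permExt (Nat.le_add_right b 1) h⁻¹) (P.basis ⟨r, j⟩) (P.basis ⟨r, i⟩))
            • Vperm d b h)
        = (((d : ℂ) + z - zb (P.endOf r)))
            • ∑ h : Equiv.Perm (Fin b), Φ.rep (P.endOf r) h⁻¹ j i • Vperm d b h := by
      rw [Finset.smul_sum]
      apply Finset.sum_congr rfl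
      intro h _
      rw [hco h, smul_smul]
    rw [hpull, smul_smul]
    congr 1
    have hd : (Φ.dim (P.endOf r) : ℂ) ≠ 0 :=
      Nat.cast_ne_zero.mpr (Φ.dim_pos (P.endOf r)).ne'
    have hf : (Nat.factorial b : ℂ) ≠ 0 :=
      Nat.cast_ne_zero.mpr (Nat.factorial_ne_zero b)
    field_simp
  · intro r r' hne i j
    rw [main r r' i j]
    have hco : ∀ h : Equiv.Perm (Fin b),
        P.rep (permExt (Nat.le_add_right b 1) h⁻¹) (P.basis ⟨r', j⟩) (P.basis ⟨r, i⟩)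
          = 0 := fun h => P.block_off h⁻¹ r' r (fun hc => hne hc.symm) j i
    have hzero : ∑ h : Equiv.Perm (Fin b),
        ((((d : ℂ) + z - zb (P.endOf r))
          * P.rep (permExt (Nat.le_add_right b 1) h⁻¹) (P.basis ⟨r', j⟩) (P.basis ⟨r, i⟩))
            • Vperm d b h) = 0 := by
      apply Finset.sum_eq_zero
      intro h _
      rw [hco h, mul_zero, zero_smul]
    rw [hzero, smul_zero]

end Aux7

/-- For an irrep `φ^μ` of `S(n)` (here `n = b + 1`) with `m_μ ≠ 0`,
in PRIR form relative to `S(n) ⊃ S(n-1)` (multiplicity-free restriction), the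
partial trace over the last factor satisfies
`tr_n E^μ_{(β,i_β),(β',j_{β'})} = δ_{ββ'}·(m_μ/m_β)·E^β_{i_β j_β}`. -/
theorem statement_6 (d b : ℕ) (hd : 2 ≤ d) (hb : 1 ≤ b)
    (Φ : IrrepFamily b) (e : ℕ) (P : PRIRData b 1 Φ e)
    (hfree : Function.Injective P.endOf)
    (hm : multSW d (b + 1) P.rep ≠ 0)
    (r r' : P.Path) (i : Fin (Φ.dim (P.endOf r))) (j : Fin (Φ.dim (P.endOf r'))) :
    ptraceLast b 1 (Eop d (b + 1) P.rep (P.basis ⟨r, i⟩) (P.basis ⟨r', j⟩))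
      = if h : P.endOf r = P.endOf r' then
          ((multSW d (b + 1) P.rep / multSW d b (Φ.rep (P.endOf r)) : ℝ) : ℂ) •
            Eop d b (Φ.rep (P.endOf r)) i (Fin.cast (congrArg Φ.dim h.symm) j)
        else 0 := by
  classical
  obtain ⟨K, hdiag, hoff⟩ := key_op d b Φ e P
  by_cases h : P.endOf r = P.endOf r'
  · have hrr : r = r' := hfree h
    subst hrr
    rw [dif_pos h]
    have hj : Fin.cast (congrArg Φ.dim h.symm) j = j := Fin.ext rfl
    rw [hj, hdiag r i j]
    -- scalar identification
    have hμ := trace_Eop_diag (d := d) (m := b + 1) P.rep P.irrep (P.basis ⟨r, i⟩)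
    have hβ := trace_Eop_diag (d := d) (m := b) (Φ.rep (P.endOf r))
      (Φ.irrep (P.endOf r)) i
    have htr : Matrix.trace (Eop d (b + 1) P.rep (P.basis ⟨r, i⟩) (P.basis ⟨r, i⟩))
        = K (P.endOf r)
            * Matrix.trace (Eop d b (Φ.rep (P.endOf r)) i i) := by
      have h1 := congrArg Matrix.trace (hdiag r i i)
      rwa [trace_ptraceLast, Matrix.trace_smul, smul_eq_mul] at h1
    have hμreal : ((Matrix.trace (Pop d (b + 1) P.rep)).re : ℂ)
        = Matrix.trace (Pop d (b + 1) P.rep) := by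
      apply Complex.conj_eq_iff_re.mp
      have := star_trace_Pop (d := d) P.rep P.irrep.1
      rwa [Complex.star_def] at this
    have hβreal : ((Matrix.trace (Pop d b (Φ.rep (P.endOf r)))).re : ℂ)
        = Matrix.trace (Pop d b (Φ.rep (P.endOf r))) := by
      apply Complex.conj_eq_iff_re.mp
      have := star_trace_Pop (d := d) (Φ.rep (P.endOf r)) (Φ.irrep (P.endOf r)).1
      rwa [Complex.star_def] at this
    have he0 : 0 < e := (P.basis ⟨r, i⟩).pos
    have he : (e : ℂ) ≠ 0 := Nat.cast_ne_zero.mpr he0.ne'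
    have heR : (e : ℝ) ≠ 0 := Nat.cast_ne_zero.mpr he0.ne'
    have hdβ : ((Φ.dim (P.endOf r) : ℕ) : ℂ) ≠ 0 :=
      Nat.cast_ne_zero.mpr (Φ.dim_pos (P.endOf r)).ne'
    have hTμre : (Matrix.trace (Pop d (b + 1) P.rep)).re ≠ 0 := by
      intro hc
      apply hm
      unfold multSW
      rw [hc, zero_div]
    have hTμ : Matrix.trace (Pop d (b + 1) P.rep) ≠ 0 := by
      intro hc
      apply hTμre
      rw [hc]
      simp
    have hKey : Matrix.trace (Pop d (b + 1) P.rep) * ((Φ.dim (P.endOf r) : ℕ) : ℂ)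
        = K (P.endOf r) * Matrix.trace (Pop d b (Φ.rep (P.endOf r))) * (e : ℂ) := by
      rw [← hμ, ← hβ, htr]
      ring
    have hTβ : Matrix.trace (Pop d b (Φ.rep (P.endOf r))) ≠ 0 := by
      intro hc
      rw [hc, mul_zero, zero_mul] at hKey
      exact (mul_ne_zero hTμ hdβ) hKey
    have hTβre : (Matrix.trace (Pop d b (Φ.rep (P.endOf r)))).re ≠ 0 := by
      intro hc
      apply hTβ
      rw [← hβreal, hc]
      simp
    have hscal : ((multSW d (b + 1) P.rep / multSW d b (Φ.rep (P.endOf r)) : ℝ) : ℂ)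
        = K (P.endOf r) := by
      unfold multSW
      push_cast
      rw [hμreal, hβreal]
      field_simp
      linear_combination hKey
    rw [hscal]
  · have hrr : r ≠ r' := fun hc => h (congrArg P.endOf hc)
    rw [dif_neg h]
    exact hoff r r' hrr i j
end
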